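/- arXiv:2309.13740 — 3 statements merged into one kernel-verified Lean document; each statement's English description precedes it below -/
import Mathlib

section
/- Let V be a finite-dimensional real representation of a finite group G. Then V admits a G-equivariant complex structure (an ℝG-endomorphism J with J² = -id) if and only if every absolutely irreducible ℝG-component of V occurs with even multiplicity. -/
open Module Polynomial

section Aux

variable {A : Type} [Ring A] [Algebra ℝ A]

/-- The scalar action of `ℝ` on a submodule over `A` commutes with the `A`-action. -/
instance submodule_smulCommClass {V : Type} [AddCommGroup V] [Module ℝ V] [Module A V]
    [IsScalarTower ℝ A V] [SMulCommClass A ℝ V] (p : Submodule A V) :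
    SMulCommClass A ℝ p := by
  constructor
  intro a c x
  apply Subtype.ext
  simp only [Submodule.coe_smul, Submodule.coe_smul_of_tower]
  exact smul_comm a c (x : V)

instance submodule_finiteDimensional {V : Type} [AddCommGroup V] [Module ℝ V] [Module A V]
    [IsScalarTower ℝ A V] [FiniteDimensional ℝ V] (p : Submodule A V) :
    FiniteDimensional ℝ p :=
  FiniteDimensional.of_injective (LinearMap.restrictScalars ℝ p.subtype) p.injective_subtype

variable {S P Q W : Type}
  [AddCommGroup S] [Module ℝ S] [Module A S] [IsScalarTower ℝ A S]
  [AddCommGroup P] [Module ℝ P] [Module A P] [IsScalarTower ℝ A P] [SMulCommClass A ℝ P]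
  [AddCommGroup Q] [Module ℝ Q] [Module A Q] [IsScalarTower ℝ A Q] [SMulCommClass A ℝ Q]
  [AddCommGroup W] [Module ℝ W] [Module A W] [IsScalarTower ℝ A W] [SMulCommClass A ℝ W]

instance fd_hom [FiniteDimensional ℝ S] [FiniteDimensional ℝ W] :
    FiniteDimensional ℝ (S →ₗ[A] W) := by
  refine FiniteDimensional.of_injective
    (⟨⟨fun f => f.restrictScalars ℝ, fun f g => rfl⟩, fun c f => rfl⟩ :
      (S →ₗ[A] W) →ₗ[ℝ] (S →ₗ[ℝ] W)) ?_
  intro f g hfg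
  ext x
  exact congrFun (congrArg DFunLike.coe hfg) x

/-- Post-composition with an equivalence, as an `ℝ`-linear equivalence of hom spaces. -/
noncomputable def homCongrRight (e : P ≃ₗ[A] Q) : (S →ₗ[A] P) ≃ₗ[ℝ] (S →ₗ[A] Q) where
  toFun f := e.toLinearMap ∘ₗ f
  invFun g := e.symm.toLinearMap ∘ₗ g
  map_add' f g := by ext x; simp
  map_smul' c f := by
    ext x
    simp [show ∀ (c : ℝ) y, e (c • y) = c • e y from
      fun c y => e.toLinearMap.map_smul_of_tower c y]
  left_inv f := by ext x; simp
  right_inv g := by ext x; simp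

/-- Hom into a direct sum decomposes. -/
noncomputable def homProdEquiv (e : (P × Q) ≃ₗ[A] W) :
    (S →ₗ[A] W) ≃ₗ[ℝ] (S →ₗ[A] P) × (S →ₗ[A] Q) where
  toFun f := (LinearMap.fst A P Q ∘ₗ (e.symm.toLinearMap ∘ₗ f),
              LinearMap.snd A P Q ∘ₗ (e.symm.toLinearMap ∘ₗ f))
  invFun gh := e.toLinearMap ∘ₗ (gh.1.prod gh.2)
  map_add' f g := by
    refine Prod.ext ?_ ?_ <;> ext x <;> simp
  map_smul' c f := by
    have hs : ∀ (c : ℝ) y, e.symm (c • y) = c • e.symm y :=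
      fun c y => e.symm.toLinearMap.map_smul_of_tower c y
    refine Prod.ext ?_ ?_ <;> ext x <;> simp [hs]
  left_inv f := by
    ext x
    simp [LinearMap.prod_apply]
  right_inv gh := by
    refine Prod.ext ?_ ?_ <;> ext x <;> simp

theorem finrank_hom_congrRight (e : P ≃ₗ[A] Q) :
    finrank ℝ (S →ₗ[A] P) = finrank ℝ (S →ₗ[A] Q) :=
  (homCongrRight (S := S) e).finrank_eq

theorem finrank_hom_prod (e : (P × Q) ≃ₗ[A] W) [FiniteDimensional ℝ S] [FiniteDimensional ℝ P]
    [FiniteDimensional ℝ Q] [FiniteDimensional ℝ W] :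
    finrank ℝ (S →ₗ[A] W) = finrank ℝ (S →ₗ[A] P) + finrank ℝ (S →ₗ[A] Q) := by
  rw [(homProdEquiv (S := S) e).finrank_eq, finrank_prod]

theorem square_neg_one_prodMap (JP : P →ₗ[A] P) (JQ : Q →ₗ[A] Q)
    (hP : JP ∘ₗ JP = -LinearMap.id) (hQ : JQ ∘ₗ JQ = -LinearMap.id) :
    (JP.prodMap JQ) ∘ₗ (JP.prodMap JQ) = -LinearMap.id := by
  apply LinearMap.ext
  intro x
  have h1 := LinearMap.congr_fun hP x.1
  have h2 := LinearMap.congr_fun hQ x.2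
  simp only [LinearMap.comp_apply, LinearMap.neg_apply, LinearMap.id_apply] at h1 h2 ⊢
  simp only [LinearMap.prodMap_apply, Prod.map]
  exact Prod.ext (by simpa using h1) (by simpa using h2)

theorem square_neg_one_conj (e : P ≃ₗ[A] W) (J : P →ₗ[A] P) (hJ : J ∘ₗ J = -LinearMap.id) :
    ∃ K : W →ₗ[A] W, K ∘ₗ K = -LinearMap.id := by
  refine ⟨e.toLinearMap ∘ₗ J ∘ₗ e.symm.toLinearMap, ?_⟩
  apply LinearMap.ext
  intro w
  have h := LinearMap.congr_fun hJ (e.symm w)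
  simp only [LinearMap.comp_apply, LinearMap.neg_apply, LinearMap.id_apply,
    LinearEquiv.coe_coe] at h ⊢
  rw [e.symm_apply_apply, h, map_neg, e.apply_symm_apply]

theorem finrank_eq_of_aequiv (e : P ≃ₗ[A] Q) : finrank ℝ P = finrank ℝ Q :=
  (LinearEquiv.restrictScalars ℝ e).finrank_eq

theorem finrank_of_prod_equiv (e : (P × Q) ≃ₗ[A] W) [FiniteDimensional ℝ P]
    [FiniteDimensional ℝ Q] [FiniteDimensional ℝ W] :
    finrank ℝ W = finrank ℝ P + finrank ℝ Q := by
  have h := (LinearEquiv.restrictScalars ℝ e).finrank_eq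
  rw [finrank_prod] at h
  exact h.symm

theorem cs_prod {JP : P →ₗ[A] P} {JQ : Q →ₗ[A] Q}
    (hP : JP ∘ₗ JP = -LinearMap.id) (hQ : JQ ∘ₗ JQ = -LinearMap.id) :
    ∃ J : (P × Q) →ₗ[A] (P × Q), J ∘ₗ J = -LinearMap.id :=
  ⟨JP.prodMap JQ, square_neg_one_prodMap JP JQ hP hQ⟩

/-- A sum of two isomorphic modules has a complex structure, by `(x, y) ↦ (-y, x)`. -/
theorem cs_pair (e : P ≃ₗ[A] Q) :
    ∃ K : (P × Q) →ₗ[A] (P × Q), K ∘ₗ K = -LinearMap.id := by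
  refine ⟨LinearMap.prod ((-(e.symm.toLinearMap)) ∘ₗ (LinearMap.snd A P Q))
    (e.toLinearMap ∘ₗ (LinearMap.fst A P Q)), ?_⟩
  apply LinearMap.ext
  intro x
  show ((-(e.symm (e (-(e.symm x.2)) , e x.1).2) : P), e (-(e.symm x.2))) = -x
  rw [e.symm_apply_apply, map_neg, e.apply_symm_apply]
  rfl

theorem even_finrank_of_complex_structure {W : Type} [AddCommGroup W] [Module ℝ W]
    [FiniteDimensional ℝ W] (J : W →ₗ[ℝ] W) (hJ : J ∘ₗ J = -LinearMap.id) :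
    Even (Module.finrank ℝ W) := by
  by_contra hodd
  have h1 : LinearMap.det (J ∘ₗ J) = LinearMap.det J * LinearMap.det J := LinearMap.det_comp J J
  rw [hJ] at h1
  have h2 : LinearMap.det (-LinearMap.id : W →ₗ[ℝ] W) = (-1 : ℝ) ^ Module.finrank ℝ W := by
    rw [show (-LinearMap.id : W →ₗ[ℝ] W) = (-1 : ℝ) • LinearMap.id by ext x; simp,
      LinearMap.det_smul, LinearMap.det_id, mul_one]
  rw [(Nat.not_even_iff_odd.mp hodd).neg_one_pow] at h2
  rw [h2] at h1
  nlinarith [sq_nonneg (LinearMap.det J)]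

theorem exists_sq_eq_neg_one {B : Type} [Ring B] [Algebra ℝ B]
    [IsDomain B] (hfd : FiniteDimensional ℝ B) (d : B) (hd : ∀ c : ℝ, d ≠ c • 1) :
    ∃ j : B, j * j = -1 := by
  haveI : Algebra.IsIntegral ℝ B := Algebra.IsIntegral.of_finite ℝ B
  have hint : IsIntegral ℝ d := Algebra.IsIntegral.isIntegral d
  have hirr : Irreducible (minpoly ℝ d) := minpoly.irreducible hint
  have hmon : (minpoly ℝ d).Monic := minpoly.monic hint
  have hub : (minpoly ℝ d).natDegree ≤ 2 := hirr.natDegree_le_two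
  have hlb : 0 < (minpoly ℝ d).natDegree := minpoly.natDegree_pos hint
  have haev : Polynomial.aeval d (minpoly ℝ d) = 0 := minpoly.aeval ℝ d
  have hsum := Polynomial.aeval_eq_sum_range (R := ℝ) (p := minpoly ℝ d) d
  rw [haev] at hsum
  have hdeg : (minpoly ℝ d).natDegree = 1 ∨ (minpoly ℝ d).natDegree = 2 := by omega
  rcases hdeg with h1 | h2
  · -- degree one: d is a real scalar, contradiction
    exfalso
    rw [h1] at hsum
    have hc1 : (minpoly ℝ d).coeff 1 = 1 := by
      have := hmon.coeff_natDegree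
      rwa [h1] at this
    simp only [Finset.sum_range_succ, Finset.sum_range_zero, pow_zero, pow_one, hc1,
      one_smul, zero_add] at hsum
    exact hd (-(minpoly ℝ d).coeff 0)
      (by rw [neg_smul]; exact eq_neg_of_add_eq_zero_right hsum.symm)
  · -- degree two
    have hc2 : (minpoly ℝ d).coeff 2 = 1 := by
      have := hmon.coeff_natDegree
      rwa [h2] at this
    rw [h2] at hsum
    simp only [Finset.sum_range_succ, Finset.sum_range_zero, pow_zero, pow_one, hc2,
      one_smul, zero_add] at hsum
    set a := (minpoly ℝ d).coeff 1 with ha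
    set b := (minpoly ℝ d).coeff 0 with hb
    have hdd : d * d = -(b • (1 : B)) - a • d := by
      rw [← pow_two]
      linear_combination (norm := abel) -hsum
    have ht : a ^ 2 / 4 - b < 0 := by
      by_contra hge
      push_neg at hge
      have hst : Real.sqrt (a ^ 2 / 4 - b) * Real.sqrt (a ^ 2 / 4 - b) = a ^ 2 / 4 - b :=
        Real.mul_self_sqrt hge
      have hroot : (minpoly ℝ d).IsRoot (-(a / 2) + Real.sqrt (a ^ 2 / 4 - b)) := by
        have hev := Polynomial.eval_eq_sum_range (p := minpoly ℝ d)
          (-(a / 2) + Real.sqrt (a ^ 2 / 4 - b))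
        rw [h2] at hev
        simp only [Finset.sum_range_succ, Finset.sum_range_zero, pow_zero, pow_one, hc2,
          one_mul, mul_one, zero_add, ← ha, ← hb] at hev
        unfold Polynomial.IsRoot
        rw [hev]
        linear_combination hst
      obtain ⟨q, hq⟩ := Polynomial.dvd_iff_isRoot.mpr hroot
      rcases hirr.isUnit_or_isUnit hq with hu | hu
      · exact Polynomial.not_isUnit_X_sub_C _ hu
      · have hqd : q.natDegree = 0 := Polynomial.natDegree_eq_zero_of_isUnit hu
        have : (minpoly ℝ d).natDegree = 1 := by
          rw [hq, Polynomial.natDegree_mul (Polynomial.X_sub_C_ne_zero _) hu.ne_zero,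
            Polynomial.natDegree_X_sub_C, hqd]
        omega
    have htne : a ^ 2 / 4 - b ≠ 0 := ne_of_lt ht
    have hs2 : Real.sqrt (-(a ^ 2 / 4 - b)) * Real.sqrt (-(a ^ 2 / 4 - b)) = -(a ^ 2 / 4 - b) :=
      Real.mul_self_sqrt (by linarith)
    set s := Real.sqrt (-(a ^ 2 / 4 - b)) with hs
    have hsne : s ≠ 0 := by
      intro h0
      rw [h0, mul_zero] at hs2
      linarith
    refine ⟨s⁻¹ • (d + (a / 2) • 1), ?_⟩
    have hinner : (d + (a / 2) • 1) * (d + (a / 2) • 1) = (a ^ 2 / 4 - b) • (1 : B) := by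
      simp only [mul_add, add_mul, smul_mul_assoc, mul_smul_comm, one_mul, mul_one, smul_smul]
      rw [hdd]
      module
    rw [smul_mul_smul_comm, hinner, smul_smul]
    have hval : s⁻¹ * s⁻¹ * (a ^ 2 / 4 - b) = -1 := by
      rw [← mul_inv, hs2, inv_neg, neg_mul, inv_mul_cancel₀ htne]
    rw [hval, neg_smul, one_smul]

/-- The multiplicity hypothesis, as a predicate on modules. -/
abbrev Hyp (A : Type) [Ring A] [Algebra ℝ A] (V : Type) [AddCommGroup V] [Module ℝ V] [Module A V]
    [SMulCommClass A ℝ V] : Prop :=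
  ∀ (S : Type) [AddCommGroup S] [Module ℝ S] [Module A S]
      [IsScalarTower ℝ A S] [SMulCommClass A ℝ S] [FiniteDimensional ℝ S],
    IsSimpleModule A S →
    (∀ f : S →ₗ[A] S, ∃ c : ℝ, f = c • LinearMap.id) →
    Even (Module.finrank ℝ (S →ₗ[A] V))

end Aux

set_option maxHeartbeats 1000000 in
set_option synthInstance.maxHeartbeats 400000 in
theorem johnson_hard (G : Type) [Group G] [Fintype G] :
    ∀ (n : ℕ) (V : Type) [AddCommGroup V] [Module ℝ V] [Module (MonoidAlgebra ℝ G) V]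
    [IsScalarTower ℝ (MonoidAlgebra ℝ G) V] [SMulCommClass (MonoidAlgebra ℝ G) ℝ V]
    [FiniteDimensional ℝ V], Module.finrank ℝ V = n → Hyp (MonoidAlgebra ℝ G) V →
    ∃ J : V →ₗ[MonoidAlgebra ℝ G] V, J ∘ₗ J = -LinearMap.id := by
  intro n
  induction n using Nat.strong_induction_on with
  | _ n ih =>
  intro V _ _ _ _ _ _ hrank hyp
  haveI : NeZero ((Fintype.card G : ℝ)) := ⟨Nat.cast_ne_zero.mpr Fintype.card_ne_zero⟩
  rcases subsingleton_or_nontrivial V with hV | hV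
  · exact ⟨0, Subsingleton.elim _ _⟩
  obtain ⟨S₀, hS₀⟩ := IsSemisimpleModule.exists_simple_submodule (MonoidAlgebra ℝ G) V
  haveI := hS₀
  haveI : Nontrivial S₀ := IsSimpleModule.nontrivial (MonoidAlgebra ℝ G) S₀
  obtain ⟨W, hW⟩ := exists_isCompl S₀
  let e : (↥S₀ × ↥W) ≃ₗ[MonoidAlgebra ℝ G] V := Submodule.prodEquivOfIsCompl S₀ W hW
  have hVrank : finrank ℝ V = finrank ℝ ↥S₀ + finrank ℝ ↥W :=
    finrank_of_prod_equiv (A := MonoidAlgebra ℝ G) (P := ↥S₀) (Q := ↥W) (W := V) e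
  have hfin0 : 0 < finrank ℝ ↥S₀ := finrank_pos
  by_cases hall : ∀ f : (↥S₀ →ₗ[MonoidAlgebra ℝ G] ↥S₀), ∃ c : ℝ, f = c • LinearMap.id
  · -- absolutely irreducible case: multiplicity is even, pair off two copies
    have heven := hyp ↥S₀ hS₀ hall
    obtain ⟨x₀, hx₀⟩ := exists_ne (0 : ↥S₀)
    have hEnd1 : finrank ℝ (↥S₀ →ₗ[MonoidAlgebra ℝ G] ↥S₀) = 1 := by
      let φ : ℝ →ₗ[ℝ] (↥S₀ →ₗ[MonoidAlgebra ℝ G] ↥S₀) :=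
        { toFun := fun c => c • LinearMap.id
          map_add' := fun c d => by exact add_smul c d _
          map_smul' := fun c d => by
            simp only [smul_eq_mul, RingHom.id_apply, mul_smul] }
      have hbij : Function.Bijective φ := by
        constructor
        · intro c d hcd
          have := LinearMap.congr_fun hcd x₀
          change c • x₀ = d • x₀ at this
          exact smul_left_injective ℝ hx₀ this
        · intro f
          obtain ⟨c, hc⟩ := hall f
          exact ⟨c, hc.symm⟩
      rw [← (LinearEquiv.ofBijective φ hbij).finrank_eq, finrank_self]
    have hdecomp := finrank_hom_prod (A := MonoidAlgebra ℝ G) (S := ↥S₀) (P := ↥S₀)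
      (Q := ↥W) (W := V) e
    rw [hdecomp, hEnd1] at heven
    have hk : finrank ℝ (↥S₀ →ₗ[MonoidAlgebra ℝ G] ↥W) ≠ 0 := by
      rcases heven with ⟨m, hm⟩
      omega
    have hgex : ∃ g : ↥S₀ →ₗ[MonoidAlgebra ℝ G] ↥W, g ≠ 0 := by
      by_contra hng
      push_neg at hng
      haveI : Subsingleton (↥S₀ →ₗ[MonoidAlgebra ℝ G] ↥W) :=
        ⟨fun f g => by rw [hng f, hng g]⟩
      exact hk (finrank_zero_of_subsingleton)
    obtain ⟨g, hg⟩ := hgex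
    have hginj : Function.Injective g := by
      rcases eq_bot_or_eq_top (LinearMap.ker g) with hker | hker
      · exact LinearMap.ker_eq_bot.mp hker
      · exact absurd (LinearMap.ker_eq_top.mp hker) hg
    -- embed two disjoint copies of S₀ into V
    let u : ↥S₀ →ₗ[MonoidAlgebra ℝ G] V := W.subtype ∘ₗ g
    have hu : Function.Injective u := by
      intro a b hab
      exact hginj (Subtype.ext hab)
    let Ψ : (↥S₀ × ↥S₀) →ₗ[MonoidAlgebra ℝ G] V :=
      (S₀.subtype ∘ₗ LinearMap.fst (MonoidAlgebra ℝ G) ↥S₀ ↥S₀)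
        + (u ∘ₗ LinearMap.snd (MonoidAlgebra ℝ G) ↥S₀ ↥S₀)
    have hΨapp : ∀ p : ↥S₀ × ↥S₀, Ψ p = (p.1 : V) + u p.2 := fun p => rfl
    have hΨ : Function.Injective Ψ := by
      rw [← LinearMap.ker_eq_bot, Submodule.eq_bot_iff]
      intro p hp
      have hp' : (p.1 : V) + u p.2 = 0 := by
        rw [← hΨapp p]
        exact hp
      have hmemW : (p.1 : V) ∈ W := by
        rw [eq_neg_of_add_eq_zero_left hp']
        exact W.neg_mem (g p.2).2
      have h10 : p.1 = 0 :=
        Subtype.ext (Submodule.disjoint_def.mp hW.disjoint (p.1 : V) p.1.2 hmemW)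
      have h20 : u p.2 = 0 := by
        rw [h10] at hp'
        simpa using hp'
      have h21 : p.2 = 0 := hu (by rw [h20, map_zero])
      exact Prod.ext h10 h21
    set P₂ : Submodule (MonoidAlgebra ℝ G) V := LinearMap.range Ψ with hP₂def
    let eP : (↥S₀ × ↥S₀) ≃ₗ[MonoidAlgebra ℝ G] ↥P₂ := LinearEquiv.ofInjective Ψ hΨ
    obtain ⟨W₃, hW₃⟩ := exists_isCompl P₂
    let eV : (↥P₂ × ↥W₃) ≃ₗ[MonoidAlgebra ℝ G] V := Submodule.prodEquivOfIsCompl P₂ W₃ hW₃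
    have hP₂rank : finrank ℝ ↥P₂ = finrank ℝ ↥S₀ + finrank ℝ ↥S₀ := by
      have h4 := finrank_eq_of_aequiv (A := MonoidAlgebra ℝ G) (P := ↥S₀ × ↥S₀)
        (Q := ↥P₂) eP
      rw [finrank_prod] at h4
      exact h4.symm
    have hVrank₂ : finrank ℝ V = finrank ℝ ↥P₂ + finrank ℝ ↥W₃ :=
      finrank_of_prod_equiv (A := MonoidAlgebra ℝ G) (P := ↥P₂) (Q := ↥W₃) (W := V) eV
    have hypW₃ : Hyp (MonoidAlgebra ℝ G) ↥W₃ := by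
      intro S _ _ _ _ _ _ hsimp habs
      have hv := hyp S hsimp habs
      have h1 := finrank_hom_prod (A := MonoidAlgebra ℝ G) (S := S) (P := ↥P₂)
        (Q := ↥W₃) (W := V) eV
      have h2 := finrank_hom_congrRight (A := MonoidAlgebra ℝ G) (S := S)
        (P := ↥S₀ × ↥S₀) (Q := ↥P₂) eP
      have h3 := finrank_hom_prod (A := MonoidAlgebra ℝ G) (S := S) (P := ↥S₀)
        (Q := ↥S₀) (W := ↥S₀ × ↥S₀) (LinearEquiv.refl _ _)
      rw [h1, ← h2, h3] at hv
      simp only [Nat.even_iff] at hv ⊢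
      omega
    obtain ⟨J₃, hJ₃⟩ := ih (finrank ℝ ↥W₃) (by omega) ↥W₃ rfl hypW₃
    obtain ⟨K, hK⟩ := cs_pair (A := MonoidAlgebra ℝ G) (P := ↥S₀) (Q := ↥S₀)
      (LinearEquiv.refl _ _)
    obtain ⟨KJ, hKJ⟩ := cs_prod (A := MonoidAlgebra ℝ G) (P := ↥S₀ × ↥S₀) (Q := ↥W₃) hK hJ₃
    let e₄ : ((↥S₀ × ↥S₀) × ↥W₃) ≃ₗ[MonoidAlgebra ℝ G] V := (eP.prodCongr (LinearEquiv.refl _ _)).trans eV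
    exact square_neg_one_conj (A := MonoidAlgebra ℝ G) (P := (↥S₀ × ↥S₀) × ↥W₃) (W := V)
      e₄ KJ hKJ
  · -- non-absolutely-irreducible case: S₀ itself has a complex structure
    push_neg at hall
    obtain ⟨d, hdn⟩ := hall
    haveI : DecidableEq (Module.End (MonoidAlgebra ℝ G) ↥S₀) := Classical.decEq _
    haveI : IsDomain (Module.End (MonoidAlgebra ℝ G) ↥S₀) := @DivisionRing.isDomain _ Module.End.instDivisionRing
    obtain ⟨j, hj⟩ := exists_sq_eq_neg_one (B := Module.End (MonoidAlgebra ℝ G) ↥S₀)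
      (fd_hom) d (by intro c hcd; exact hdn c hcd)
    have hJ₀ : (j : ↥S₀ →ₗ[MonoidAlgebra ℝ G] ↥S₀) ∘ₗ j = -LinearMap.id := hj
    have hypW : Hyp (MonoidAlgebra ℝ G) ↥W := by
      intro S _ _ _ _ _ _ hsimp habs
      haveI := hsimp
      have hv := hyp S hsimp habs
      have h1 := finrank_hom_prod (A := MonoidAlgebra ℝ G) (S := S) (P := ↥S₀)
        (Q := ↥W) (W := V) e
      have hz : finrank ℝ (S →ₗ[MonoidAlgebra ℝ G] ↥S₀) = 0 := by
        haveI : Subsingleton (S →ₗ[MonoidAlgebra ℝ G] ↥S₀) := by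
          constructor
          intro f f'
          have hf0 : ∀ f'' : S →ₗ[MonoidAlgebra ℝ G] ↥S₀, f'' = 0 := by
            intro f''
            by_contra hne
            have hbij : Function.Bijective f'' := LinearMap.bijective_of_ne_zero hne
            let ε := LinearEquiv.ofBijective f'' hbij
            obtain ⟨c, hc⟩ := habs (ε.symm.toLinearMap ∘ₗ (d ∘ₗ ε.toLinearMap))
            apply hdn c
            apply LinearMap.ext
            intro x
            have := LinearMap.congr_fun hc (ε.symm x)
            simp only [LinearMap.comp_apply, LinearMap.smul_apply, LinearMap.id_apply,
              LinearEquiv.coe_coe] at this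
            rw [ε.apply_symm_apply] at this
            have h4 : d x = ε (c • ε.symm x) := by
              rw [← this, ε.apply_symm_apply]
            have h5 := ε.toLinearMap.map_smul_of_tower c (ε.symm x)
            simp only [LinearEquiv.coe_coe] at h5
            rw [LinearMap.smul_apply, LinearMap.id_apply, h4, h5, ε.apply_symm_apply]
          rw [hf0 f, hf0 f']
        exact finrank_zero_of_subsingleton
      rw [h1, hz, zero_add] at hv
      exact hv
    obtain ⟨JW, hJW⟩ := ih (finrank ℝ ↥W) (by omega) ↥W rfl hypW
    obtain ⟨KJ, hKJ⟩ := cs_prod (A := MonoidAlgebra ℝ G) (P := ↥S₀) (Q := ↥W) hJ₀ hJW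
    exact square_neg_one_conj (A := MonoidAlgebra ℝ G) (P := ↥S₀ × ↥W) (W := V) e KJ hKJ

/-- Johnson's criterion: a finite-dimensional real representation `V` of a finite group `G`
(viewed as a module over the group algebra `ℝ[G]`) admits a `G`-equivariant complex structure
`J` (with `J² = -id`) if and only if every absolutely irreducible component `S` of `V`
(i.e. every simple `ℝG`-module whose equivariant endomorphisms are the real scalars)
occurs in `V` with even multiplicity, the multiplicity being
`dim_ℝ Hom_{ℝG}(S, V)` since `End_{ℝG}(S) = ℝ`. -/
theorem essentially_complex_iff_even_multiplicities
    (G : Type) [Group G] [Fintype G]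
    (V : Type) [AddCommGroup V] [Module ℝ V] [Module (MonoidAlgebra ℝ G) V]
    [IsScalarTower ℝ (MonoidAlgebra ℝ G) V] [SMulCommClass (MonoidAlgebra ℝ G) ℝ V]
    [FiniteDimensional ℝ V] :
    (∃ J : V →ₗ[MonoidAlgebra ℝ G] V, J ∘ₗ J = -LinearMap.id) ↔
    (∀ (S : Type) [AddCommGroup S] [Module ℝ S] [Module (MonoidAlgebra ℝ G) S]
        [IsScalarTower ℝ (MonoidAlgebra ℝ G) S] [SMulCommClass (MonoidAlgebra ℝ G) ℝ S]
        [FiniteDimensional ℝ S],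
      IsSimpleModule (MonoidAlgebra ℝ G) S →
      (∀ f : S →ₗ[MonoidAlgebra ℝ G] S, ∃ c : ℝ, f = c • LinearMap.id) →
      Even (Module.finrank ℝ (S →ₗ[MonoidAlgebra ℝ G] V))) := by
  constructor
  · rintro ⟨J, hJ⟩ S _ _ _ _ _ _ hsimp habs
    let Φ : (S →ₗ[MonoidAlgebra ℝ G] V) →ₗ[ℝ] (S →ₗ[MonoidAlgebra ℝ G] V) :=
      { toFun := fun f => J ∘ₗ f
        map_add' := fun f g => by ext x; simp
        map_smul' := fun c f => by
          ext x
          simp [J.map_smul_of_tower] }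
    have hΦ : Φ ∘ₗ Φ = -LinearMap.id := by
      apply LinearMap.ext
      intro f
      apply LinearMap.ext
      intro x
      have := LinearMap.congr_fun hJ (f x)
      simp only [LinearMap.comp_apply, LinearMap.neg_apply, LinearMap.id_apply] at this ⊢
      exact this
    exact even_finrank_of_complex_structure Φ hΦ
  · intro h
    exact johnson_hard G (finrank ℝ V) V rfl h
end

section
/- Let V be a homogeneous real representation of a finite group G whose simple component S satisfies End_{ℝG}(S) ≅ ℝ or End_{ℝG}(S) ≅ ℍ. Then for any two complex structures J, J' on V, the holomorphic parts V_J^{1,0} and V_{J'}^{1,0} are isomorphic ℂG-modules. -/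
theorem cstr_conj {H₁ H₂ : Type} [AddCommGroup H₁] [Module ℝ H₁] [AddCommGroup H₂] [Module ℝ H₂]
    [FiniteDimensional ℝ H₁] [FiniteDimensional ℝ H₂]
    (K₁ : H₁ →ₗ[ℝ] H₁) (K₂ : H₂ →ₗ[ℝ] H₂)
    (h₁ : ∀ x, K₁ (K₁ x) = -x) (h₂ : ∀ x, K₂ (K₂ x) = -x)
    (hrank : Module.finrank ℝ H₁ = Module.finrank ℝ H₂) :
    ∃ u : H₁ ≃ₗ[ℝ] H₂, ∀ x, u (K₁ x) = K₂ (u x) := by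
  have hK₁ : (K₁ : Module.End ℝ H₁) * K₁ = -1 := by
    ext x; simp [Module.End.mul_apply, h₁]
  have hK₂ : (K₂ : Module.End ℝ H₂) * K₂ = -1 := by
    ext x; simp [Module.End.mul_apply, h₂]
  letI m₁ : Module ℂ H₁ := Module.compHom H₁ (Complex.liftAux (K₁ : Module.End ℝ H₁) hK₁).toRingHom
  letI m₂ : Module ℂ H₂ := Module.compHom H₂ (Complex.liftAux (K₂ : Module.End ℝ H₂) hK₂).toRingHom
  have smul₁ : ∀ (z : ℂ) (x : H₁), z • x = (Complex.liftAux (K₁ : Module.End ℝ H₁) hK₁ z) x :=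
    fun z x => rfl
  have smul₂ : ∀ (z : ℂ) (x : H₂), z • x = (Complex.liftAux (K₂ : Module.End ℝ H₂) hK₂ z) x :=
    fun z x => rfl
  haveI t₁ : IsScalarTower ℝ ℂ H₁ := by
    constructor
    intro r z x
    rw [smul₁, smul₁, map_smul]
    rfl
  haveI t₂ : IsScalarTower ℝ ℂ H₂ := by
    constructor
    intro r z x
    rw [smul₂, smul₂, map_smul]
    rfl
  haveI f₁ : FiniteDimensional ℂ H₁ := FiniteDimensional.right ℝ ℂ H₁
  haveI f₂ : FiniteDimensional ℂ H₂ := FiniteDimensional.right ℝ ℂ H₂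
  have hr : Module.finrank ℂ H₁ = Module.finrank ℂ H₂ := by
    have e₁ := Module.finrank_mul_finrank ℝ ℂ H₁
    have e₂ := Module.finrank_mul_finrank ℝ ℂ H₂
    rw [Complex.finrank_real_complex] at e₁ e₂
    omega
  obtain ⟨u₀⟩ := FiniteDimensional.nonempty_linearEquiv_of_finrank_eq hr
  refine ⟨u₀.restrictScalars ℝ, fun x => ?_⟩
  have hx : K₁ x = (Complex.I : ℂ) • x := by
    rw [smul₁, Complex.liftAux_apply_I]
  have hx₂ : ∀ y : H₂, K₂ y = (Complex.I : ℂ) • y := by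
    intro y; rw [smul₂, Complex.liftAux_apply_I]
  simp only [LinearEquiv.restrictScalars_apply, hx, hx₂, map_smul]

theorem quat_conj {H : Type} [AddCommGroup H] [Module ℝ H] [FiniteDimensional ℝ H]
    (K K' A B : H →ₗ[ℝ] H)
    (hK : ∀ x, K (K x) = -x) (hK' : ∀ x, K' (K' x) = -x)
    (hA : ∀ x, A (A x) = -x) (hB : ∀ x, B (B x) = -x)
    (hAB : ∀ x, A (B x) = -B (A x))
    (hKA : ∀ x, K (A x) = A (K x)) (hKB : ∀ x, K (B x) = B (K x))
    (hK'A : ∀ x, K' (A x) = A (K' x)) (hK'B : ∀ x, K' (B x) = B (K' x)) :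
    ∃ u : H ≃ₗ[ℝ] H, (∀ x, u (K x) = K' (u x)) ∧ (∀ x, u (A x) = A (u x)) ∧
      (∀ x, u (B x) = B (u x)) := by
  classical
  -- the two involutions
  set p : H →ₗ[ℝ] H := K ∘ₗ A with hp
  set p' : H →ₗ[ℝ] H := K' ∘ₗ A with hp'
  have ppt : ∀ x, p x = K (A x) := fun x => rfl
  have ppt' : ∀ x, p' x = K' (A x) := fun x => rfl
  have hpp : ∀ x, p (p x) = x := by
    intro x; rw [ppt, ppt, hKA, hK, map_neg, hA, neg_neg]
  have hpp' : ∀ x, p' (p' x) = x := by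
    intro x; rw [ppt', ppt', hK'A, hK', map_neg, hA, neg_neg]
  have hpK : ∀ x, p (K x) = K (p x) := by
    intro x; rw [ppt, ppt, hKA, hK, hK, map_neg]
  have hpA : ∀ x, p (A x) = A (p x) := by
    intro x; rw [ppt, ppt, hKA]
  have hpB : ∀ x, p (B x) = -B (p x) := by
    intro x
    rw [ppt, ppt]
    rw [hAB x, map_neg, hKB]
  have hp'K' : ∀ x, p' (K' x) = K' (p' x) := by
    intro x; rw [ppt', ppt', hK'A, hK', hK', map_neg]
  have hp'A : ∀ x, p' (A x) = A (p' x) := by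
    intro x; rw [ppt', ppt', hK'A]
  have hp'B : ∀ x, p' (B x) = -B (p' x) := by
    intro x
    rw [ppt', ppt']
    rw [hAB x, map_neg, hK'B]
  -- eigенspaces
  set Hp : Submodule ℝ H := LinearMap.ker (p - LinearMap.id) with hHp
  set Hm : Submodule ℝ H := LinearMap.ker (p + LinearMap.id) with hHm
  set Hp' : Submodule ℝ H := LinearMap.ker (p' - LinearMap.id) with hHp'
  set Hm' : Submodule ℝ H := LinearMap.ker (p' + LinearMap.id) with hHm'
  have memp : ∀ x, x ∈ Hp ↔ p x = x := by
    intro x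
    simp [hHp, LinearMap.mem_ker, sub_eq_zero]
  have memm : ∀ x, x ∈ Hm ↔ p x = -x := by
    intro x
    simp [hHm, LinearMap.mem_ker, add_eq_zero_iff_eq_neg]
  have memp' : ∀ x, x ∈ Hp' ↔ p' x = x := by
    intro x
    simp [hHp', LinearMap.mem_ker, sub_eq_zero]
  have memm' : ∀ x, x ∈ Hm' ↔ p' x = -x := by
    intro x
    simp [hHm', LinearMap.mem_ker, add_eq_zero_iff_eq_neg]
  -- projections
  set Pp : H →ₗ[ℝ] H := (2⁻¹ : ℝ) • (LinearMap.id + p) with hPpdef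
  set Pm : H →ₗ[ℝ] H := (2⁻¹ : ℝ) • (LinearMap.id - p) with hPmdef
  set Pp' : H →ₗ[ℝ] H := (2⁻¹ : ℝ) • (LinearMap.id + p') with hPp'def
  set Pm' : H →ₗ[ℝ] H := (2⁻¹ : ℝ) • (LinearMap.id - p') with hPm'def
  have Pp_apply : ∀ x, Pp x = (2⁻¹ : ℝ) • (x + p x) := fun x => rfl
  have Pm_apply : ∀ x, Pm x = (2⁻¹ : ℝ) • (x - p x) := fun x => rfl
  have Pp'_apply : ∀ x, Pp' x = (2⁻¹ : ℝ) • (x + p' x) := fun x => rfl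
  have Pm'_apply : ∀ x, Pm' x = (2⁻¹ : ℝ) • (x - p' x) := fun x => rfl
  have Pp_mem : ∀ x, Pp x ∈ Hp := by
    intro x
    rw [memp]
    simp only [Pp_apply, map_smul, map_add, hpp]
    module
  have Pm_mem : ∀ x, Pm x ∈ Hm := by
    intro x
    rw [memm]
    simp only [Pm_apply, map_smul, map_sub, hpp]
    module
  have Pp'_mem : ∀ x, Pp' x ∈ Hp' := by
    intro x
    rw [memp']
    simp only [Pp'_apply, map_smul, map_add, hpp']
    module
  have Pm'_mem : ∀ x, Pm' x ∈ Hm' := by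
    intro x
    rw [memm']
    simp only [Pm'_apply, map_smul, map_sub, hpp']
    module
  have PpPm : ∀ x, Pp x + Pm x = x := by
    intro x
    rw [Pp_apply, Pm_apply]
    module
  have Pp'Pm' : ∀ x, Pp' x + Pm' x = x := by
    intro x
    rw [Pp'_apply, Pm'_apply]
    module
  have Pp_id : ∀ x ∈ Hp, Pp x = x := by
    intro x hx
    rw [Pp_apply, (memp x).1 hx]
    module
  have Pm_zero : ∀ x ∈ Hp, Pm x = 0 := by
    intro x hx
    rw [Pm_apply, (memp x).1 hx]
    module
  have Pp'_id : ∀ x ∈ Hp', Pp' x = x := by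
    intro x hx
    rw [Pp'_apply, (memp' x).1 hx]
    module
  have Pm'_zero : ∀ x ∈ Hp', Pm' x = 0 := by
    intro x hx
    rw [Pm'_apply, (memp' x).1 hx]
    module
  have Pp_zeroB : ∀ x ∈ Hm, Pp x = 0 := by
    intro x hx
    rw [Pp_apply, (memm x).1 hx]
    module
  have Pm_idB : ∀ x ∈ Hm, Pm x = x := by
    intro x hx
    rw [Pm_apply, (memm x).1 hx]
    module
  have Pp'_zeroB : ∀ x ∈ Hm', Pp' x = 0 := by
    intro x hx
    rw [Pp'_apply, (memm' x).1 hx]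
    module
  have Pm'_idB : ∀ x ∈ Hm', Pm' x = x := by
    intro x hx
    rw [Pm'_apply, (memm' x).1 hx]
    module
  -- commutation of projections with K, A, B
  have PpK : ∀ x, Pp (K x) = K (Pp x) := by
    intro x; simp only [Pp_apply, map_smul, map_add, hpK]
  have PmK : ∀ x, Pm (K x) = K (Pm x) := by
    intro x; simp only [Pm_apply, map_smul, map_sub, hpK]
  have PpA : ∀ x, Pp (A x) = A (Pp x) := by
    intro x; simp only [Pp_apply, map_smul, map_add, hpA]
  have PmA : ∀ x, Pm (A x) = A (Pm x) := by
    intro x; simp only [Pm_apply, map_smul, map_sub, hpA]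
  have PpB : ∀ x, Pp (B x) = B (Pm x) := by
    intro x
    simp only [Pp_apply, Pm_apply, map_smul, map_add, map_sub, hpB]
    module
  have PmB : ∀ x, Pm (B x) = B (Pp x) := by
    intro x
    simp only [Pp_apply, Pm_apply, map_smul, map_add, map_sub, hpB]
    module
  have Pp'K' : ∀ x, Pp' (K' x) = K' (Pp' x) := by
    intro x; simp only [Pp'_apply, map_smul, map_add, hp'K']
  have Pm'K' : ∀ x, Pm' (K' x) = K' (Pm' x) := by
    intro x; simp only [Pm'_apply, map_smul, map_sub, hp'K']
  have Pp'B : ∀ x, Pp' (B x) = B (Pm' x) := by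
    intro x
    simp only [Pp'_apply, Pm'_apply, map_smul, map_add, map_sub, hp'B]
    module
  have Pm'B : ∀ x, Pm' (B x) = B (Pp' x) := by
    intro x
    simp only [Pp'_apply, Pm'_apply, map_smul, map_add, map_sub, hp'B]
    module
  -- B maps between plus and minus parts
  have B_pm : ∀ x ∈ Hp, B x ∈ Hm := by
    intro x hx
    rw [memm, hpB, (memp x).1 hx]
  have B_mp : ∀ x ∈ Hm, B x ∈ Hp := by
    intro x hx
    rw [memp, hpB, (memm x).1 hx, map_neg, neg_neg]
  have B_pm' : ∀ x ∈ Hp', B x ∈ Hm' := by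
    intro x hx
    rw [memm', hp'B, (memp' x).1 hx]
  have B_mp' : ∀ x ∈ Hm', B x ∈ Hp' := by
    intro x hx
    rw [memp', hp'B, (memm' x).1 hx, map_neg, neg_neg]
  have K_p : ∀ x ∈ Hp, K x ∈ Hp := by
    intro x hx; rw [memp, hpK, (memp x).1 hx]
  have K'_p' : ∀ x ∈ Hp', K' x ∈ Hp' := by
    intro x hx; rw [memp', hp'K', (memp' x).1 hx]
  -- on the plus parts, A acts as -K (resp. -K')
  have A_eq : ∀ x ∈ Hp, A x = -K x := by
    intro x hx
    have h1 : K (A x) = x := (memp x).1 hx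
    have h2 := congrArg K h1
    rw [hK] at h2
    rw [← h2, neg_neg]
  have A_eq' : ∀ x ∈ Hp', A x = -K' x := by
    intro x hx
    have h1 : K' (A x) = x := (memp' x).1 hx
    have h2 := congrArg K' h1
    rw [hK'] at h2
    rw [← h2, neg_neg]
  -- complementarity and dimensions
  have compl : IsCompl Hp Hm := by
    constructor
    · rw [Submodule.disjoint_def]
      intro x hx1 hx2
      have hxx : x = -x := ((memp x).1 hx1).symm.trans ((memm x).1 hx2)
      have h2 : (2 : ℝ) • x = 0 := by
        rw [two_smul]
        nth_rewrite 2 [hxx]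
        exact add_neg_cancel x
      exact (smul_eq_zero.1 h2).resolve_left (by norm_num)
    · rw [codisjoint_iff, Submodule.eq_top_iff']
      intro x
      exact Submodule.mem_sup.2 ⟨Pp x, Pp_mem x, Pm x, Pm_mem x, PpPm x⟩
  have compl' : IsCompl Hp' Hm' := by
    constructor
    · rw [Submodule.disjoint_def]
      intro x hx1 hx2
      have hxx : x = -x := ((memp' x).1 hx1).symm.trans ((memm' x).1 hx2)
      have h2 : (2 : ℝ) • x = 0 := by
        rw [two_smul]
        nth_rewrite 2 [hxx]
        exact add_neg_cancel x
      exact (smul_eq_zero.1 h2).resolve_left (by norm_num)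
    · rw [codisjoint_iff, Submodule.eq_top_iff']
      intro x
      exact Submodule.mem_sup.2 ⟨Pp' x, Pp'_mem x, Pm' x, Pm'_mem x, Pp'Pm' x⟩
  have eBpm : Hp ≃ₗ[ℝ] Hm := by
    refine LinearEquiv.ofLinear
      (LinearMap.codRestrict Hm (B ∘ₗ Hp.subtype) (fun c => B_pm c.1 c.2))
      (LinearMap.codRestrict Hp ((-B) ∘ₗ Hm.subtype) (fun c => by
        simpa using Submodule.neg_mem _ (B_mp c.1 c.2))) ?_ ?_
    · apply LinearMap.ext
      intro c
      apply Subtype.ext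
      show B (-B c.1) = c.1
      rw [map_neg, hB, neg_neg]
    · apply LinearMap.ext
      intro c
      apply Subtype.ext
      show -B (B c.1) = c.1
      rw [hB, neg_neg]
  have eBpm' : Hp' ≃ₗ[ℝ] Hm' := by
    refine LinearEquiv.ofLinear
      (LinearMap.codRestrict Hm' (B ∘ₗ Hp'.subtype) (fun c => B_pm' c.1 c.2))
      (LinearMap.codRestrict Hp' ((-B) ∘ₗ Hm'.subtype) (fun c => by
        simpa using Submodule.neg_mem _ (B_mp' c.1 c.2))) ?_ ?_
    · apply LinearMap.ext
      intro c
      apply Subtype.ext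
      show B (-B c.1) = c.1
      rw [map_neg, hB, neg_neg]
    · apply LinearMap.ext
      intro c
      apply Subtype.ext
      show -B (B c.1) = c.1
      rw [hB, neg_neg]
  have fr1 : Module.finrank ℝ Hp + Module.finrank ℝ Hm = Module.finrank ℝ H :=
    Submodule.finrank_add_eq_of_isCompl compl
  have fr2 : Module.finrank ℝ Hp' + Module.finrank ℝ Hm' = Module.finrank ℝ H :=
    Submodule.finrank_add_eq_of_isCompl compl'
  have fr3 : Module.finrank ℝ Hp = Module.finrank ℝ Hm := eBpm.finrank_eq
  have fr4 : Module.finrank ℝ Hp' = Module.finrank ℝ Hm' := eBpm'.finrank_eq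
  have hrank : Module.finrank ℝ Hp = Module.finrank ℝ Hp' := by omega
  -- restricted complex structures
  set Kr : Hp →ₗ[ℝ] Hp := K.restrict K_p with hKrdef
  set K'r : Hp' →ₗ[ℝ] Hp' := K'.restrict K'_p' with hK'rdef
  have Kr_coe : ∀ y : Hp, (Kr y : H) = K y := fun y => rfl
  have K'r_coe : ∀ y : Hp', (K'r y : H) = K' y := fun y => rfl
  obtain ⟨u₀, hu₀⟩ := cstr_conj Kr K'r
    (fun y => by apply Subtype.ext; show K (K y) = -(y : H); rw [hK])
    (fun y => by apply Subtype.ext; show K' (K' y) = -(y : H); rw [hK'])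
    hrank
  -- the building blocks of u and its inverse
  set π : H →ₗ[ℝ] Hp := LinearMap.codRestrict Hp Pp Pp_mem with hπdef
  set τ : H →ₗ[ℝ] Hp := LinearMap.codRestrict Hp ((-B) ∘ₗ Pm)
    (fun x => by simpa using Submodule.neg_mem _ (B_mp _ (Pm_mem x))) with hτdef
  set π' : H →ₗ[ℝ] Hp' := LinearMap.codRestrict Hp' Pp' Pp'_mem with hπ'def
  set τ' : H →ₗ[ℝ] Hp' := LinearMap.codRestrict Hp' ((-B) ∘ₗ Pm')
    (fun x => by simpa using Submodule.neg_mem _ (B_mp' _ (Pm'_mem x))) with hτ'def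
  have π_coe : ∀ x, (π x : H) = Pp x := fun x => rfl
  have τ_coe : ∀ x, (τ x : H) = -B (Pm x) := fun x => rfl
  have π'_coe : ∀ x, (π' x : H) = Pp' x := fun x => rfl
  have τ'_coe : ∀ x, (τ' x : H) = -B (Pm' x) := fun x => rfl
  set u : H →ₗ[ℝ] H :=
    Hp'.subtype ∘ₗ (u₀ : Hp →ₗ[ℝ] Hp') ∘ₗ π + B ∘ₗ Hp'.subtype ∘ₗ (u₀ : Hp →ₗ[ℝ] Hp') ∘ₗ τ
    with hudef
  set w : H →ₗ[ℝ] H :=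
    Hp.subtype ∘ₗ (u₀.symm : Hp' →ₗ[ℝ] Hp) ∘ₗ π' +
      B ∘ₗ Hp.subtype ∘ₗ (u₀.symm : Hp' →ₗ[ℝ] Hp) ∘ₗ τ' with hwdef
  have uapp : ∀ x, u x = ↑(u₀ (π x)) + B ↑(u₀ (τ x)) := fun x => rfl
  have wapp : ∀ x, w x = ↑(u₀.symm (π' x)) + B ↑(u₀.symm (τ' x)) := fun x => rfl
  -- w is a two-sided inverse of u
  have wu : ∀ x, w (u x) = x := by
    intro x
    have hπ'u : π' (u x) = u₀ (π x) := by
      apply Subtype.ext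
      rw [π'_coe, uapp, map_add, Pp'_id _ (u₀ (π x)).2, Pp'B,
        Pm'_zero _ (u₀ (τ x)).2, map_zero, add_zero]
    have hτ'u : τ' (u x) = u₀ (τ x) := by
      apply Subtype.ext
      rw [τ'_coe, uapp, map_add, Pm'_zero _ (u₀ (π x)).2, zero_add, Pm'B,
        Pp'_id _ (u₀ (τ x)).2, hB, neg_neg]
    rw [wapp, hπ'u, hτ'u, u₀.symm_apply_apply, u₀.symm_apply_apply, π_coe, τ_coe,
      map_neg, hB, neg_neg]
    exact PpPm x
  have uw : ∀ x, u (w x) = x := by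
    intro x
    have hπw : π (w x) = u₀.symm (π' x) := by
      apply Subtype.ext
      rw [π_coe, wapp, map_add, Pp_id _ (u₀.symm (π' x)).2, PpB,
        Pm_zero _ (u₀.symm (τ' x)).2, map_zero, add_zero]
    have hτw : τ (w x) = u₀.symm (τ' x) := by
      apply Subtype.ext
      rw [τ_coe, wapp, map_add, Pm_zero _ (u₀.symm (π' x)).2, zero_add, PmB,
        Pp_id _ (u₀.symm (τ' x)).2, hB, neg_neg]
    rw [uapp, hπw, hτw, u₀.apply_symm_apply, u₀.apply_symm_apply, π'_coe, τ'_coe,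
      map_neg, hB, neg_neg]
    exact Pp'Pm' x
  -- the three commutation properties
  have huK : ∀ x, u (K x) = K' (u x) := by
    intro x
    have h1 : π (K x) = Kr (π x) := by
      apply Subtype.ext
      rw [π_coe, PpK, Kr_coe, π_coe]
    have h2 : τ (K x) = Kr (τ x) := by
      apply Subtype.ext
      show -B (Pm (K x)) = K (-B (Pm x))
      rw [PmK, map_neg, hKB]
    rw [uapp, h1, h2, hu₀, hu₀, K'r_coe, K'r_coe, uapp, map_add, hK'B]
  have huA : ∀ x, u (A x) = A (u x) := by
    intro x
    have h1 : π (A x) = -Kr (π x) := by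
      apply Subtype.ext
      rw [π_coe, PpA]
      show A (Pp x) = -(Kr (π x) : H)
      rw [Kr_coe, π_coe, A_eq _ (Pp_mem x)]
    have h2 : τ (A x) = Kr (τ x) := by
      apply Subtype.ext
      show -B (Pm (A x)) = K (-B (Pm x))
      rw [PmA, ← hAB (Pm x)]
      have hy : -B (Pm x) ∈ Hp := (τ x).2
      have h4 := A_eq _ hy
      rw [map_neg] at h4
      exact neg_inj.1 h4
    rw [uapp, h1, h2, map_neg, hu₀, hu₀]
    rw [Submodule.coe_neg, K'r_coe, K'r_coe, uapp, map_add]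
    rw [A_eq' _ (u₀ (π x)).2, hAB, A_eq' _ (u₀ (τ x)).2, map_neg, neg_neg]
  have huB : ∀ x, u (B x) = B (u x) := by
    intro x
    have h1 : π (B x) = -τ x := by
      apply Subtype.ext
      rw [π_coe, PpB, Submodule.coe_neg, τ_coe, neg_neg]
    have h2 : τ (B x) = π x := by
      apply Subtype.ext
      rw [τ_coe, PmB, hB, neg_neg, π_coe]
    rw [uapp, h1, h2, map_neg, Submodule.coe_neg, uapp, map_add, hB]
    abel
  exact ⟨LinearEquiv.ofLinear u w (LinearMap.ext uw) (LinearMap.ext wu), huK, huA, huB⟩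

theorem quat_ii : ((⟨0, 1, 0, 0⟩ : Quaternion ℝ) * ⟨0, 1, 0, 0⟩) = -1 := by ext <;> simp

theorem quat_jj : ((⟨0, 0, 1, 0⟩ : Quaternion ℝ) * ⟨0, 0, 1, 0⟩) = -1 := by ext <;> simp

theorem quat_ji : ((⟨0, 0, 1, 0⟩ : Quaternion ℝ) * ⟨0, 1, 0, 0⟩) =
    -((⟨0, 1, 0, 0⟩ : Quaternion ℝ) * ⟨0, 0, 1, 0⟩) := by ext <;> simp

theorem quat_decomp (q qi qj : Quaternion ℝ) (i0 : qi.re = 0) (i1 : qi.imI = 1) (i2 : qi.imJ = 0)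
    (i3 : qi.imK = 0) (j0 : qj.re = 0) (j1 : qj.imI = 0) (j2 : qj.imJ = 1) (j3 : qj.imK = 0) :
    q = q.re • 1 + q.imI • qi + q.imJ • qj + q.imK • (qi * qj) := by
  apply Quaternion.ext <;>
    simp [Quaternion.re_mul, Quaternion.imI_mul, Quaternion.imJ_mul, Quaternion.imK_mul,
      Quaternion.re_one, Quaternion.imI_one, Quaternion.imJ_one, Quaternion.imK_one,
      i0, i1, i2, i3, j0, j1, j2, j3]

open scoped TensorProduct

set_option maxHeartbeats 1000000 in
/-- Let `V` be a homogeneous real representation of a finite group `G` whose simple component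
`S` is of real or quaternionic type (`End_{ℝG}(S) ≅ ℝ` or `≅ ℍ`). Then for any two complex
structures `J`, `J'` on `V`, the holomorphic parts `V_J^{1,0}` and `V_{J'}^{1,0}` are
isomorphic `ℂG`-modules. -/
theorem holomorphic_parts_iso_of_real_or_quaternionic_type
    {G : Type} [Group G] [Fintype G]
    (V : Type) [AddCommGroup V] [Module ℝ V] [FiniteDimensional ℝ V]
    (ρ : Representation ℝ G V)
    (S : Type) [AddCommGroup S] [Module ℝ S] [FiniteDimensional ℝ S] [Nontrivial S]
    (ρS : Representation ℝ G S)
    -- `S` is simple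
    (hsimple : ∀ W : Submodule ℝ S, (∀ g : G, ∀ x ∈ W, ρS g x ∈ W) → W = ⊥ ∨ W = ⊤)
    -- `V` is homogeneous with simple component `S`
    (hhom : ∃ (n : ℕ) (e : V ≃ₗ[ℝ] (Fin n → S)),
      ∀ (g : G) (x : V) (i : Fin n), e (ρ g x) i = ρS g (e x i))
    -- `End_{ℝG}(S)` is isomorphic to `ℝ` or to the quaternions `ℍ`
    (htype :
      Nonempty ((Subalgebra.centralizer ℝ (Set.range fun g : G => (ρS g : Module.End ℝ S)))
          ≃ₐ[ℝ] ℝ) ∨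
      Nonempty ((Subalgebra.centralizer ℝ (Set.range fun g : G => (ρS g : Module.End ℝ S)))
          ≃ₐ[ℝ] Quaternion ℝ))
    (J J' : V →ₗ[ℝ] V)
    (hJG : ∀ g : G, J ∘ₗ ρ g = ρ g ∘ₗ J) (hJ : J ∘ₗ J = -LinearMap.id)
    (hJ'G : ∀ g : G, J' ∘ₗ ρ g = ρ g ∘ₗ J') (hJ' : J' ∘ₗ J' = -LinearMap.id) :
    ∃ e : Module.End.eigenspace (J.baseChange ℂ) Complex.I ≃ₗ[ℂ]
          Module.End.eigenspace (J'.baseChange ℂ) Complex.I,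
      ∀ (g : G) (x : Module.End.eigenspace (J.baseChange ℂ) Complex.I)
        (hg : (ρ g).baseChange ℂ ↑x ∈ Module.End.eigenspace (J.baseChange ℂ) Complex.I),
        (e ⟨(ρ g).baseChange ℂ ↑x, hg⟩ : ℂ ⊗[ℝ] V) = (ρ g).baseChange ℂ ↑(e x) := by

  classical
  obtain ⟨n, e, he⟩ := hhom
  -- pointwise versions of the hypotheses
  have hJpt : ∀ v, J (J v) = -v := fun v => by
    have := LinearMap.ext_iff.1 hJ v
    simpa using this
  have hJ'pt : ∀ v, J' (J' v) = -v := fun v => by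
    have := LinearMap.ext_iff.1 hJ' v
    simpa using this
  have hJGpt : ∀ g v, J (ρ g v) = ρ g (J v) := fun g v => LinearMap.ext_iff.1 (hJG g) v
  have hJ'Gpt : ∀ g v, J' (ρ g v) = ρ g (J' v) := fun g v => LinearMap.ext_iff.1 (hJ'G g) v
  set D := Subalgebra.centralizer ℝ (Set.range fun g : G => (ρS g : Module.End ℝ S)) with hDdef
  have memD : ∀ d : Module.End ℝ S, d ∈ D ↔ ∀ g s, ρS g (d s) = d (ρS g s) := by
    intro d
    constructor
    · intro hd g s
      have := hd (ρS g : Module.End ℝ S) ⟨g, rfl⟩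
      exact LinearMap.ext_iff.1 this s
    · intro hd
      rintro y ⟨g, rfl⟩
      exact LinearMap.ext (hd g)
  -- the space of equivariant linear maps S → V
  set HS : Submodule ℝ (S →ₗ[ℝ] V) :=
    { carrier := {f | ∀ g s, f (ρS g s) = ρ g (f s)}
      add_mem' := fun hf hg g s => by
        simp only [LinearMap.add_apply, hf g s, hg g s, map_add]
      zero_mem' := fun g s => by simp
      smul_mem' := fun c f hf g s => by
        simp only [LinearMap.smul_apply, hf g s, map_smul] } with hHSdef
  have memHS : ∀ f : S →ₗ[ℝ] V, f ∈ HS ↔ ∀ g s, f (ρS g s) = ρ g (f s) := fun f => Iff.rfl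
  -- composition operators on HS
  have hKmem : ∀ f ∈ HS, (LinearMap.llcomp ℝ S V V J) f ∈ HS := by
    intro f hf g s
    simp only [LinearMap.llcomp_apply, LinearMap.comp_apply, (memHS f).1 hf g s, hJGpt]
  have hK'mem : ∀ f ∈ HS, (LinearMap.llcomp ℝ S V V J') f ∈ HS := by
    intro f hf g s
    simp only [LinearMap.llcomp_apply, LinearMap.comp_apply, (memHS f).1 hf g s, hJ'Gpt]
  set K : HS →ₗ[ℝ] HS := (LinearMap.llcomp ℝ S V V J).restrict hKmem with hKdef
  set K' : HS →ₗ[ℝ] HS := (LinearMap.llcomp ℝ S V V J').restrict hK'mem with hK'def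
  have K_apply : ∀ (f : HS) (s : S), ((K f : HS) : S →ₗ[ℝ] V) s = J (f.1 s) := fun f s => rfl
  have K'_apply : ∀ (f : HS) (s : S), ((K' f : HS) : S →ₗ[ℝ] V) s = J' (f.1 s) := fun f s => rfl
  have hKK : ∀ f : HS, K (K f) = -f := by
    intro f
    apply Subtype.ext
    apply LinearMap.ext
    intro s
    show J (J (f.1 s)) = -(f.1 s)
    rw [hJpt]
  have hK'K' : ∀ f : HS, K' (K' f) = -f := by
    intro f
    apply Subtype.ext
    apply LinearMap.ext
    intro s
    show J' (J' (f.1 s)) = -(f.1 s)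
    rw [hJ'pt]
  -- right composition by elements of the centralizer
  have hRmem : ∀ (d : D) (f : S →ₗ[ℝ] V), f ∈ HS → (LinearMap.lcomp ℝ V (d : Module.End ℝ S)) f ∈ HS := by
    intro d f hf g s
    simp only [LinearMap.lcomp_apply, LinearMap.comp_apply]
    rw [← (memD _).1 d.2 g s, (memHS f).1 hf g _]
  set Rd : D → (HS →ₗ[ℝ] HS) :=
    fun d => (LinearMap.lcomp ℝ V (d : Module.End ℝ S)).restrict (hRmem d) with hRddef
  have Rd_apply : ∀ (d : D) (f : HS) (s : S), ((Rd d f : HS) : S →ₗ[ℝ] V) s = f.1 (d.1 s) :=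
    fun d f s => rfl
  -- the key intertwiner on HS
  have main : ∃ u : HS ≃ₗ[ℝ] HS, (∀ f, u (K f) = K' (u f)) ∧
      (∀ (d : D) (f : HS), u (Rd d f) = Rd d (u f)) := by
    rcases htype with ⟨⟨φ⟩⟩ | ⟨⟨φ⟩⟩
    · -- real type
      obtain ⟨u, hu⟩ := cstr_conj K K' hKK hK'K' rfl
      refine ⟨u, hu, ?_⟩
      intro d f
      have hd : ∀ s, (d : Module.End ℝ S) s = φ d • s := by
        have h1 : d = φ d • (1 : D) := by
          apply φ.injective
          rw [map_smul, map_one, smul_eq_mul, mul_one]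
        intro s
        rw [h1]
        simp
      have hRdf : ∀ h : HS, Rd d h = φ d • h := by
        intro h
        apply Subtype.ext
        apply LinearMap.ext
        intro s
        rw [Rd_apply, hd, map_smul]
        rfl
      rw [hRdf, hRdf, map_smul]
    · -- quaternionic type
      set qi : Quaternion ℝ := ⟨0, 1, 0, 0⟩ with hqi
      set qj : Quaternion ℝ := ⟨0, 0, 1, 0⟩ with hqj
      set a : D := φ.symm qi with ha
      set b : D := φ.symm qj with hb
      have haa : a * a = -1 := by
        rw [ha, ← map_mul, show qi * qi = -1 from quat_ii, map_neg, map_one]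
      have hbb : b * b = -1 := by
        rw [hb, ← map_mul, show qj * qj = -1 from quat_jj, map_neg, map_one]
      have hba : b * a = -(a * b) := by
        rw [ha, hb, ← map_mul, ← map_mul, ← map_neg]
        congr 1
        exact quat_ji
      have coe_negone : ((-1 : D) : Module.End ℝ S) = -1 := by
        simp
      obtain ⟨u, huK, huA, huB⟩ := quat_conj K K' (Rd a) (Rd b) hKK hK'K'
        (fun f => by
          apply Subtype.ext; apply LinearMap.ext; intro s
          rw [Rd_apply, Rd_apply]
          show f.1 ((a.1 * a.1) s) = (-f : HS).1 s
          rw [show a.1 * a.1 = ((a * a : D) : Module.End ℝ S) from rfl, haa, coe_negone]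
          simp)
        (fun f => by
          apply Subtype.ext; apply LinearMap.ext; intro s
          rw [Rd_apply, Rd_apply]
          show f.1 ((b.1 * b.1) s) = (-f : HS).1 s
          rw [show b.1 * b.1 = ((b * b : D) : Module.End ℝ S) from rfl, hbb, coe_negone]
          simp)
        (fun f => by
          apply Subtype.ext; apply LinearMap.ext; intro s
          rw [Rd_apply, Rd_apply]
          show f.1 ((b.1 * a.1) s) = (-(Rd b (Rd a f)) : HS).1 s
          rw [show b.1 * a.1 = ((b * a : D) : Module.End ℝ S) from rfl, hba]
          have : ((-(a * b) : D) : Module.End ℝ S) = -((a * b : D) : Module.End ℝ S) := by simp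
          rw [this]
          simp only [LinearMap.neg_apply, map_neg]
          rfl)
        (fun f => rfl) (fun f => rfl) (fun f => rfl) (fun f => rfl)
      refine ⟨u, huK, ?_⟩
      intro d f
      set q : Quaternion ℝ := φ d with hq
      have hdecomp : d = q.re • 1 + q.imI • a + q.imJ • b + q.imK • (a * b) := by
        apply φ.injective
        rw [map_add, map_add, map_add, map_smul, map_smul, map_smul, map_smul, map_one,
          map_mul, ha, hb, φ.apply_symm_apply, φ.apply_symm_apply]
        exact quat_decomp (φ d) qi qj rfl rfl rfl rfl rfl rfl rfl rfl
      have hRdd : ∀ h : HS, Rd d h =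
          q.re • h + q.imI • Rd a h + q.imJ • Rd b h + q.imK • Rd b (Rd a h) := by
        intro h
        apply Subtype.ext
        apply LinearMap.ext
        intro s
        rw [Rd_apply]
        have hds : d.1 s = q.re • s + q.imI • a.1 s + q.imJ • b.1 s + q.imK • a.1 (b.1 s) := by
          have := congrArg (fun z : D => (z : Module.End ℝ S) s) hdecomp
          simpa using this
        rw [hds]
        simp only [map_add, map_smul]
        rfl
      rw [hRdd, hRdd, map_add, map_add, map_add, map_smul, map_smul, map_smul, map_smul,
        huA, huB, huB, huA]
  obtain ⟨u, huK, huD⟩ := main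
  have huD' : ∀ (d : D) (f : HS), u.symm (Rd d f) = Rd d (u.symm f) := by
    intro d f
    apply u.injective
    rw [u.apply_symm_apply, huD, u.apply_symm_apply]
  -- the standard injections and projections
  have hιmem : ∀ i : Fin n, (e.symm.toLinearMap ∘ₗ LinearMap.single ℝ (fun _ => S) i) ∈ HS := by
    intro i g s
    simp only [LinearMap.comp_apply, LinearMap.coe_single, LinearEquiv.coe_coe]
    apply e.injective
    funext j
    rw [e.apply_symm_apply, he, e.apply_symm_apply, Pi.single_apply, Pi.single_apply,
      apply_ite (ρS g), map_zero]
  set ι : Fin n → HS := fun i => ⟨_, hιmem i⟩ with hιdef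
  set pr : Fin n → (V →ₗ[ℝ] S) := fun i => LinearMap.proj i ∘ₗ e.toLinearMap with hprdef
  have ι_apply : ∀ i s, (ι i).1 s = e.symm (Pi.single i s) := fun i s => rfl
  have pr_apply : ∀ i v, pr i v = e v i := fun i v => rfl
  have pr_equiv : ∀ i g v, pr i (ρ g v) = ρS g (pr i v) := by
    intro i g v
    rw [pr_apply, pr_apply, he]
  have hrecon : ∀ v, ∑ i, (ι i).1 (pr i v) = v := by
    intro v
    have : ∀ i, (ι i).1 (pr i v) = e.symm (Pi.single i (e v i)) := fun i => rfl
    simp only [this]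
    rw [← map_sum, Finset.univ_sum_single (e v), e.symm_apply_apply]
  set U : V →ₗ[ℝ] V := ∑ i, ((u (ι i) : HS) : S →ₗ[ℝ] V) ∘ₗ pr i with hUdef
  set U' : V →ₗ[ℝ] V := ∑ i, ((u.symm (ι i) : HS) : S →ₗ[ℝ] V) ∘ₗ pr i with hU'def
  have U_apply : ∀ v, U v = ∑ i, (u (ι i)).1 (pr i v) := by
    intro v
    rw [hUdef, LinearMap.sum_apply]
    rfl
  have U'_apply : ∀ v, U' v = ∑ i, (u.symm (ι i)).1 (pr i v) := by
    intro v
    rw [hU'def, LinearMap.sum_apply]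
    rfl
  -- U intertwines the group action
  have hUG : ∀ g v, U (ρ g v) = ρ g (U v) := by
    intro g v
    rw [U_apply, U_apply, map_sum]
    refine Finset.sum_congr rfl fun i _ => ?_
    rw [pr_equiv, (memHS _).1 (u (ι i)).2 g (pr i v)]
  -- U intertwines J and J'
  have hUJ : ∀ v, U (J v) = J' (U v) := by
    intro v
    have dijmem : ∀ i j : Fin n, (pr i ∘ₗ J ∘ₗ (ι j).1) ∈ D := by
      intro i j
      rw [memD]
      intro g s
      show ρS g ((pr i) (J ((ι j).1 s))) = (pr i) (J ((ι j).1 (ρS g s)))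
      rw [(memHS _).1 (ι j).2 g s, hJGpt, pr_equiv]
    set dij : Fin n → Fin n → D := fun i j => ⟨pr i ∘ₗ J ∘ₗ (ι j).1, dijmem i j⟩ with hdij
    have step1 : ∀ i, pr i (J v) = ∑ j, (dij i j).1 (pr j v) := by
      intro i
      conv_lhs => rw [← hrecon v]
      rw [map_sum, map_sum]
      rfl
    have step2 : ∀ j, (∑ i, Rd (dij i j) (ι i)) = K (ι j) := by
      intro j
      apply Subtype.ext
      apply LinearMap.ext
      intro s
      have hcoe : ((∑ i, Rd (dij i j) (ι i) : HS) : S →ₗ[ℝ] V) s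
          = ∑ i, (Rd (dij i j) (ι i)).1 s := by
        rw [Submodule.coe_sum]
        simp [LinearMap.sum_apply]
      rw [hcoe]
      have : ∀ i, (Rd (dij i j) (ι i)).1 s = (ι i).1 (pr i (J ((ι j).1 s))) := fun i => rfl
      simp only [this]
      rw [hrecon]
      rfl
    rw [U_apply, U_apply]
    calc ∑ i, (u (ι i)).1 (pr i (J v))
        = ∑ i, ∑ j, (u (ι i)).1 ((dij i j).1 (pr j v)) := by
          refine Finset.sum_congr rfl fun i _ => ?_
          rw [step1, map_sum]
      _ = ∑ j, ∑ i, (u (Rd (dij i j) (ι i))).1 (pr j v) := by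
          rw [Finset.sum_comm]
          refine Finset.sum_congr rfl fun j _ => Finset.sum_congr rfl fun i _ => ?_
          rw [huD]
          rfl
      _ = ∑ j, (u (K (ι j))).1 (pr j v) := by
          refine Finset.sum_congr rfl fun j _ => ?_
          rw [← step2, map_sum]
          rw [Submodule.coe_sum]
          simp [LinearMap.sum_apply]
      _ = J' (∑ j, (u (ι j)).1 (pr j v)) := by
          rw [map_sum]
          refine Finset.sum_congr rfl fun j _ => ?_
          rw [huK]
          rfl
  -- U' is a two-sided inverse of U
  have cancel : ∀ (u₁ u₂ : HS ≃ₗ[ℝ] HS), (∀ (d : D) (f : HS), u₂ (Rd d f) = Rd d (u₂ f)) →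
      (∀ f, u₂ (u₁ f) = f) → ∀ v, (∑ i, (u₂ (ι i)).1 (pr i (∑ j, (u₁ (ι j)).1 (pr j v)))) = v := by
    intro u₁ u₂ hu₂ hu₂₁ v
    have cijmem : ∀ i j : Fin n, (pr i ∘ₗ (u₁ (ι j)).1) ∈ D := by
      intro i j
      rw [memD]
      intro g s
      show ρS g ((pr i) ((u₁ (ι j)).1 s)) = (pr i) ((u₁ (ι j)).1 (ρS g s))
      rw [(memHS _).1 (u₁ (ι j)).2 g s, pr_equiv]
    set cij : Fin n → Fin n → D := fun i j => ⟨pr i ∘ₗ (u₁ (ι j)).1, cijmem i j⟩ with hcij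
    have step1 : ∀ i, pr i (∑ j, (u₁ (ι j)).1 (pr j v)) = ∑ j, (cij i j).1 (pr j v) := by
      intro i
      rw [map_sum]
      rfl
    have step2 : ∀ j, (∑ i, Rd (cij i j) (ι i)) = u₁ (ι j) := by
      intro j
      apply Subtype.ext
      apply LinearMap.ext
      intro s
      have hcoe : ((∑ i, Rd (cij i j) (ι i) : HS) : S →ₗ[ℝ] V) s
          = ∑ i, (Rd (cij i j) (ι i)).1 s := by
        rw [Submodule.coe_sum]
        simp [LinearMap.sum_apply]
      rw [hcoe]
      have : ∀ i, (Rd (cij i j) (ι i)).1 s = (ι i).1 (pr i ((u₁ (ι j)).1 s)) := fun i => rfl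
      simp only [this]
      rw [hrecon]
    calc ∑ i, (u₂ (ι i)).1 (pr i (∑ j, (u₁ (ι j)).1 (pr j v)))
        = ∑ i, ∑ j, (u₂ (ι i)).1 ((cij i j).1 (pr j v)) := by
          refine Finset.sum_congr rfl fun i _ => ?_
          rw [step1, map_sum]
      _ = ∑ j, ∑ i, (u₂ (Rd (cij i j) (ι i))).1 (pr j v) := by
          rw [Finset.sum_comm]
          refine Finset.sum_congr rfl fun j _ => Finset.sum_congr rfl fun i _ => ?_
          rw [hu₂]
          rfl
      _ = ∑ j, (u₂ (u₁ (ι j))).1 (pr j v) := by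
          refine Finset.sum_congr rfl fun j _ => ?_
          rw [← step2, map_sum]
          rw [Submodule.coe_sum]
          simp [LinearMap.sum_apply]
      _ = v := by
          simp only [hu₂₁]
          exact hrecon v
  have hU'U : ∀ v, U' (U v) = v := by
    intro v
    rw [U_apply, U'_apply]
    exact cancel u u.symm huD' (fun f => u.symm_apply_apply f) v
  have hUU' : ∀ v, U (U' v) = v := by
    intro v
    rw [U_apply, U'_apply]
    exact cancel u.symm u huD (fun f => u.apply_symm_apply f) v
  -- base change
  set Uc := U.baseChange ℂ with hUc
  set U'c := U'.baseChange ℂ with hU'c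
  have hUcJ : ∀ x : ℂ ⊗[ℝ] V, Uc (J.baseChange ℂ x) = J'.baseChange ℂ (Uc x) := by
    have h1 : U ∘ₗ J = J' ∘ₗ U := LinearMap.ext hUJ
    intro x
    have := congrArg (fun f : V →ₗ[ℝ] V => f.baseChange ℂ) h1
    simp only [LinearMap.baseChange_comp] at this
    exact LinearMap.ext_iff.1 this x
  have hUcG : ∀ (g : G) (x : ℂ ⊗[ℝ] V), Uc ((ρ g).baseChange ℂ x) = (ρ g).baseChange ℂ (Uc x) := by
    intro g
    have h1 : U ∘ₗ ρ g = ρ g ∘ₗ U := LinearMap.ext (hUG g)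
    intro x
    have := congrArg (fun f : V →ₗ[ℝ] V => f.baseChange ℂ) h1
    simp only [LinearMap.baseChange_comp] at this
    exact LinearMap.ext_iff.1 this x
  have hU'cUc : ∀ x, U'c (Uc x) = x := by
    have h1 : U' ∘ₗ U = LinearMap.id := LinearMap.ext hU'U
    intro x
    have := congrArg (fun f : V →ₗ[ℝ] V => f.baseChange ℂ) h1
    simp only [LinearMap.baseChange_comp, LinearMap.baseChange_id] at this
    exact LinearMap.ext_iff.1 this x
  have hUcU'c : ∀ x, Uc (U'c x) = x := by
    have h1 : U ∘ₗ U' = LinearMap.id := LinearMap.ext hUU'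
    intro x
    have := congrArg (fun f : V →ₗ[ℝ] V => f.baseChange ℂ) h1
    simp only [LinearMap.baseChange_comp, LinearMap.baseChange_id] at this
    exact LinearMap.ext_iff.1 this x
  have hUc_mem : ∀ x ∈ Module.End.eigenspace (J.baseChange ℂ) Complex.I,
      Uc x ∈ Module.End.eigenspace (J'.baseChange ℂ) Complex.I := by
    intro x hx
    rw [Module.End.mem_eigenspace_iff] at hx ⊢
    rw [← hUcJ, hx, map_smul]
  have hU'c_mem : ∀ x ∈ Module.End.eigenspace (J'.baseChange ℂ) Complex.I,
      U'c x ∈ Module.End.eigenspace (J.baseChange ℂ) Complex.I := by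
    intro x hx
    rw [Module.End.mem_eigenspace_iff] at hx ⊢
    have h2 : ∀ y : ℂ ⊗[ℝ] V, U'c (J'.baseChange ℂ y) = J.baseChange ℂ (U'c y) := by
      intro y
      have h3 := congrArg U'c (hUcJ (U'c y))
      rw [hU'cUc, hUcU'c] at h3
      exact h3.symm
    rw [← h2, hx, map_smul]
  refine ⟨LinearEquiv.ofLinear (Uc.restrict hUc_mem) (U'c.restrict hU'c_mem)
    (LinearMap.ext fun x => Subtype.ext ?_) (LinearMap.ext fun x => Subtype.ext ?_), ?_⟩
  · show Uc (U'c x.1) = x.1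
    exact hUcU'c x.1
  · show U'c (Uc x.1) = x.1
    exact hU'cUc x.1
  · intro g x hg
    show Uc ((ρ g).baseChange ℂ x.1) = (ρ g).baseChange ℂ (Uc x.1)
    exact hUcG g x.1
end

section
/- Let V be a homogeneous real representation of a finite group G with a complex structure J, and let W ⊆ V be a G-submodule that itself admits a complex structure. Then there exists a complex structure J' on V with J'(W) = W and such that V_J^{1,0} ≅ V_{J'}^{1,0} as ℂG-modules. -/
open scoped TensorProduct

namespace CSAux
set_option linter.unusedSectionVars false
set_option maxHeartbeats 1000000
variable {G : Type} [Group G] [Fintype G]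

section defs
variable {X : Type} [AddCommGroup X] [Module ℝ X]

def Invt (ρX : Representation ℝ G X) (A : Submodule ℝ X) : Prop :=
  ∀ g : G, ∀ x ∈ A, ρX g x ∈ A

def JInvt (JX : X →ₗ[ℝ] X) (A : Submodule ℝ X) : Prop := ∀ x ∈ A, JX x ∈ A

lemma ρ_apply_mul (ρX : Representation ℝ G X) (a b : G) (y : X) :
    ρX (a * b) y = ρX a (ρX b y) := by rw [map_mul]; rfl

def resRep (ρX : Representation ℝ G X) (A : Submodule ℝ X) (hA : Invt ρX A) :
    Representation ℝ G A where
  toFun g := (ρX g).restrict (hA g)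
  map_one' := by
    ext a
    simp only [LinearMap.restrict_coe_apply, Module.End.one_apply]
    rw [map_one]; rfl
  map_mul' g h := by
    ext a
    simp only [LinearMap.restrict_coe_apply, Module.End.mul_apply, ρ_apply_mul]

@[simp] lemma resRep_coe (ρX : Representation ℝ G X) (A : Submodule ℝ X) (hA : Invt ρX A)
    (g : G) (a : A) : (resRep ρX A hA g a : X) = ρX g a := rfl

variable {S : Type} [AddCommGroup S] [Module ℝ S]

def ρpi (ρS : Representation ℝ G S) (p : ℕ) : Representation ℝ G (Fin p → S) where
  toFun g := LinearMap.pi fun i => (ρS g) ∘ₗ LinearMap.proj i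
  map_one' := by
    refine LinearMap.ext fun x => ?_
    funext i
    simp only [LinearMap.pi_apply, LinearMap.comp_apply, LinearMap.proj_apply,
      Module.End.one_apply]
    rw [map_one]; rfl
  map_mul' g h := by
    refine LinearMap.ext fun x => ?_
    funext i
    simp only [LinearMap.pi_apply, LinearMap.comp_apply, LinearMap.proj_apply,
      Module.End.mul_apply, ρ_apply_mul]

@[simp] lemma ρpi_apply (ρS : Representation ℝ G S) (p : ℕ) (g : G) (x : Fin p → S)
    (i : Fin p) : ρpi ρS p g x i = ρS g (x i) := rfl

end defs

section maschke
variable {X : Type} [AddCommGroup X] [Module ℝ X]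

lemma ρ_inv_apply (ρX : Representation ℝ G X) (g : G) (y : X) :
    ρX g (ρX g⁻¹ y) = y := by
  rw [← ρ_apply_mul, mul_inv_cancel, map_one]; rfl

/-- invariance of a submodule under a representation -/
lemma maschke (ρX : Representation ℝ G X) (A : Submodule ℝ X) (hA : Invt ρX A)
    (π₁ : X →ₗ[ℝ] X) (h1 : ∀ x, π₁ x ∈ A) (h2 : ∀ a ∈ A, π₁ a = a) :
    ∃ π : X →ₗ[ℝ] X, (∀ x, π x ∈ A) ∧ (∀ a ∈ A, π a = a) ∧
      (∀ g, π ∘ₗ ρX g = ρX g ∘ₗ π) ∧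
      (∀ f : X →ₗ[ℝ] X, (∀ g, f ∘ₗ ρX g = ρX g ∘ₗ f) → f ∘ₗ π₁ = π₁ ∘ₗ f →
        f ∘ₗ π = π ∘ₗ f) := by
  classical
  set c : ℝ := (Fintype.card G : ℝ)⁻¹ with hc
  refine ⟨c • ∑ g : G, ρX g ∘ₗ π₁ ∘ₗ ρX g⁻¹, ?_, ?_, ?_, ?_⟩
  · intro x
    simp only [LinearMap.smul_apply, LinearMap.sum_apply, LinearMap.comp_apply]
    exact A.smul_mem _ (Submodule.sum_mem _ fun g _ => hA g _ (h1 _))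
  · intro a ha
    have key : ∀ g : G, (ρX g ∘ₗ π₁ ∘ₗ ρX g⁻¹) a = a := by
      intro g
      simp only [LinearMap.comp_apply]
      rw [h2 _ (hA g⁻¹ a ha), ρ_inv_apply]
    simp only [LinearMap.smul_apply, LinearMap.sum_apply, key, Finset.sum_const,
      Finset.card_univ]
    rw [hc, ← Nat.cast_smul_eq_nsmul ℝ, smul_smul,
      inv_mul_cancel₀ (by exact_mod_cast Fintype.card_ne_zero), one_smul]
  · intro g₀
    ext x
    simp only [LinearMap.comp_apply, LinearMap.smul_apply, LinearMap.sum_apply,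
      map_smul, map_sum]
    congr 1
    refine Fintype.sum_equiv (Equiv.mulLeft g₀⁻¹) _ _ fun h => ?_
    simp only [Equiv.coe_mulLeft, LinearMap.comp_apply]
    rw [← ρ_apply_mul ρX g₀, mul_inv_cancel_left, mul_inv_rev, inv_inv,
      ρ_apply_mul ρX h⁻¹]
  · intro f hfG hfπ
    ext x
    simp only [LinearMap.comp_apply, LinearMap.smul_apply, LinearMap.sum_apply,
      map_smul, map_sum]
    congr 1
    refine Finset.sum_congr rfl fun g _ => ?_
    have h1' := congrArg (fun F => F (ρX g⁻¹ x)) hfπ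
    have h2' := congrArg (fun F => F (π₁ (ρX g⁻¹ x))) (hfG g)
    have h3' := congrArg (fun F => F x) (hfG g⁻¹)
    simp only [LinearMap.comp_apply] at h1' h2' h3' ⊢
    rw [h2', h1', h3']


/-- turn an equivariant projection into an invariant complement -/
lemma compl_of_proj (ρX : Representation ℝ G X) (A : Submodule ℝ X)
    (π : X →ₗ[ℝ] X) (hr : ∀ x, π x ∈ A) (hid : ∀ a ∈ A, π a = a)
    (hg : ∀ g, π ∘ₗ ρX g = ρX g ∘ₗ π) :
    ∃ C : Submodule ℝ X, IsCompl A C ∧ Invt ρX C ∧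
      (∀ f : X →ₗ[ℝ] X, f ∘ₗ π = π ∘ₗ f → JInvt f C) := by
  refine ⟨LinearMap.ker π, ⟨?_, ?_⟩, ?_, ?_⟩
  · rw [disjoint_iff_inf_le]
    rintro x ⟨hxA, hxK⟩
    have : π x = x := hid x hxA
    rw [LinearMap.mem_ker.mp hxK] at this
    rw [Submodule.mem_bot, ← this]
  · rw [codisjoint_iff_le_sup]
    intro x _
    have hx : x = π x + (x - π x) := by abel
    have h2 : x - π x ∈ LinearMap.ker π := by
      rw [LinearMap.mem_ker, map_sub, hid _ (hr x), sub_self]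
    exact hx ▸ Submodule.add_mem_sup (hr x) h2
  · intro g x hx
    rw [LinearMap.mem_ker] at hx ⊢
    have := congrArg (fun F => F x) (hg g)
    simp only [LinearMap.comp_apply] at this
    rw [this, hx, map_zero]
  · intro f hf x hx
    rw [LinearMap.mem_ker] at hx ⊢
    have := congrArg (fun F => F x) hf
    simp only [LinearMap.comp_apply] at this
    rw [← this, hx, map_zero]

/-- existence of an initial (plain linear) projection onto a submodule -/
lemma exists_proj (A : Submodule ℝ X) :
    ∃ π₀ : X →ₗ[ℝ] X, (∀ x, π₀ x ∈ A) ∧ (∀ a ∈ A, π₀ a = a) := by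
  obtain ⟨C₀, hC₀⟩ := Submodule.exists_isCompl A
  refine ⟨A.subtype ∘ₗ Submodule.projectionOnto A C₀ hC₀, fun x => ?_, fun a ha => ?_⟩
  · simp only [LinearMap.comp_apply, Submodule.coe_subtype]; exact (Submodule.projectionOnto A C₀ hC₀ x).2
  · simp only [LinearMap.comp_apply, Submodule.coe_subtype,
      Submodule.projectionOnto_apply_left hC₀ ⟨a, ha⟩]

lemma exists_invt_compl (ρX : Representation ℝ G X) (A : Submodule ℝ X) (hA : Invt ρX A) :
    ∃ C : Submodule ℝ X, IsCompl A C ∧ Invt ρX C := by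
  obtain ⟨π₀, h1, h2⟩ := exists_proj A
  obtain ⟨π, hr, hid, hg, -⟩ := maschke ρX A hA π₀ h1 h2
  obtain ⟨C, h⟩ := compl_of_proj ρX A π hr hid hg
  exact ⟨C, h.1, h.2.1⟩

lemma exists_invt_compl_J (ρX : Representation ℝ G X) (JX : X →ₗ[ℝ] X)
    (hJG : ∀ g, JX ∘ₗ ρX g = ρX g ∘ₗ JX) (hJsq : JX ∘ₗ JX = -LinearMap.id)
    (A : Submodule ℝ X) (hA : Invt ρX A) (hJA : JInvt JX A) :
    ∃ C : Submodule ℝ X, IsCompl A C ∧ Invt ρX C ∧ JInvt JX C := by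
  obtain ⟨π₀, h1, h2⟩ := exists_proj A
  set π₁ : X →ₗ[ℝ] X := (2⁻¹ : ℝ) • (π₀ - JX ∘ₗ π₀ ∘ₗ JX) with hπ₁
  have h1' : ∀ x, π₁ x ∈ A := by
    intro x
    simp only [hπ₁, LinearMap.smul_apply, LinearMap.sub_apply, LinearMap.comp_apply]
    exact A.smul_mem _ (A.sub_mem (h1 x) (hJA _ (h1 _)))
  have hJsq' : ∀ x, JX (JX x) = -x := by
    intro x
    have := congrArg (fun F => F x) hJsq
    simpa using this
  have h2' : ∀ a ∈ A, π₁ a = a := by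
    intro a ha
    simp only [hπ₁, LinearMap.smul_apply, LinearMap.sub_apply, LinearMap.comp_apply]
    rw [h2 a ha, h2 _ (hJA a ha), hJsq']
    rw [sub_neg_eq_add, ← two_smul ℝ, smul_smul]
    norm_num
  have hcomm : JX ∘ₗ π₁ = π₁ ∘ₗ JX := by
    ext x
    simp only [hπ₁, LinearMap.comp_apply, LinearMap.smul_apply, LinearMap.sub_apply,
      map_smul, map_sub]
    rw [hJsq' (π₀ (JX x))]
    congr 1
    rw [sub_neg_eq_add]
    have : π₀ (JX (JX x)) = - π₀ x := by rw [hJsq', map_neg]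
    rw [this, map_neg, sub_neg_eq_add, add_comm]
  obtain ⟨π, hr, hid, hg, htrans⟩ := maschke ρX A hA π₁ h1' h2'
  obtain ⟨C, hC1, hC2, hC3⟩ := compl_of_proj ρX A π hr hid hg
  exact ⟨C, hC1, hC2, hC3 JX (htrans JX hJG hcomm)⟩

/-- a nonzero submodule satisfying a property Q contains a minimal nonzero one -/
lemma exists_minimal [FiniteDimensional ℝ X] (Q : Submodule ℝ X → Prop)
    (A : Submodule ℝ X) (hA : Q A) (hA0 : A ≠ ⊥) :
    ∃ T : Submodule ℝ X, T ≤ A ∧ Q T ∧ T ≠ ⊥ ∧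
      (∀ T' ≤ T, Q T' → T' ≠ ⊥ → T' = T) := by
  obtain ⟨n, hn⟩ : ∃ n, Module.finrank ℝ A = n := ⟨_, rfl⟩
  induction n using Nat.strong_induction_on generalizing A with
  | _ n ih =>
    by_cases hmin : ∀ T' ≤ A, Q T' → T' ≠ ⊥ → T' = A
    · exact ⟨A, le_refl _, hA, hA0, hmin⟩
    · push_neg at hmin
      obtain ⟨T', hT'le, hT'Q, hT'0, hT'ne⟩ := hmin
      have hlt : Module.finrank ℝ T' < n := by
        rw [← hn]
        exact Submodule.finrank_lt_finrank_of_lt (lt_of_le_of_ne hT'le hT'ne)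
      obtain ⟨T, h1, h2, h3, h4⟩ := ih _ (hn ▸ hlt) T' hT'Q hT'0 rfl
      exact ⟨T, h1.trans hT'le, h2, h3, h4⟩


end maschke

section eqv
variable {X : Type} [AddCommGroup X] [Module ℝ X]
variable {Y : Type} [AddCommGroup Y] [Module ℝ Y]
variable {Z : Type} [AddCommGroup Z] [Module ℝ Z]

/-- equivariance of a linear map between two representations -/
def Eqv (ρX : Representation ℝ G X) (ρY : Representation ℝ G Y) (f : X →ₗ[ℝ] Y) : Prop :=
  ∀ g, f ∘ₗ ρX g = ρY g ∘ₗ f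

lemma Eqv.apply {ρX : Representation ℝ G X} {ρY : Representation ℝ G Y} {f : X →ₗ[ℝ] Y}
    (h : Eqv ρX ρY f) (g : G) (x : X) : f (ρX g x) = ρY g (f x) := by
  have := congrArg (fun F => F x) (h g); simpa using this

lemma Eqv.comp {ρX : Representation ℝ G X} {ρY : Representation ℝ G Y}
    {ρZ : Representation ℝ G Z} {f : X →ₗ[ℝ] Y} {f' : Y →ₗ[ℝ] Z}
    (h : Eqv ρX ρY f) (h' : Eqv ρY ρZ f') : Eqv ρX ρZ (f' ∘ₗ f) := by
  intro g; ext x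
  simp only [LinearMap.comp_apply, h.apply, h'.apply]

lemma Eqv.symm {ρX : Representation ℝ G X} {ρY : Representation ℝ G Y} {f : X ≃ₗ[ℝ] Y}
    (h : Eqv ρX ρY f.toLinearMap) : Eqv ρY ρX f.symm.toLinearMap := by
  intro g; ext y
  simp only [LinearMap.comp_apply, LinearEquiv.coe_coe]
  have := h.apply g (f.symm y)
  simp only [LinearEquiv.coe_coe, LinearEquiv.apply_symm_apply] at this
  rw [← this, LinearEquiv.symm_apply_apply]

end eqv

section homog
variable {S : Type} [AddCommGroup S] [Module ℝ S] [FiniteDimensional ℝ S] [Nontrivial S]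
variable {ρS : Representation ℝ G S}
variable {X : Type} [AddCommGroup X] [Module ℝ X] [FiniteDimensional ℝ X]
variable {ρX : Representation ℝ G X} {p : ℕ} {ι : X →ₗ[ℝ] (Fin p → S)}

/-- a minimal nonzero invariant submodule of a context is equivariantly isomorphic to S -/
lemma minimal_iso_S (hsimple : ∀ A : Submodule ℝ S, Invt ρS A → A = ⊥ ∨ A = ⊤)
    (hιinj : Function.Injective ι) (hιeqv : Eqv ρX (ρpi ρS p) ι)
    (T : Submodule ℝ X) (hT : Invt ρX T) (hT0 : T ≠ ⊥)
    (hmin : ∀ T' ≤ T, Invt ρX T' → T' ≠ ⊥ → T' = T) :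
    ∃ f : T ≃ₗ[ℝ] S, Eqv (resRep ρX T hT) ρS f.toLinearMap := by
  obtain ⟨t, htT, ht0⟩ := Submodule.exists_mem_ne_zero_of_ne_bot hT0
  have hιt : ι t ≠ 0 := fun h => ht0 (hιinj (by rw [h, map_zero]))
  obtain ⟨i, hi⟩ : ∃ i, ι t i ≠ 0 := by
    by_contra h
    push_neg at h
    exact hιt (funext h)
  set φ : T →ₗ[ℝ] S := (LinearMap.proj i) ∘ₗ ι ∘ₗ T.subtype with hφ
  have hφeqv : Eqv (resRep ρX T hT) ρS φ := by
    intro g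
    ext x
    simp only [hφ, LinearMap.comp_apply, LinearMap.proj_apply, Submodule.coe_subtype,
      resRep_coe]
    rw [hιeqv.apply g]
    simp only [ρpi_apply]
  have hφt : φ ⟨t, htT⟩ ≠ 0 := hi
  have hinj : Function.Injective φ := by
    set K : Submodule ℝ X := (LinearMap.ker φ).map T.subtype with hK
    have hKle : K ≤ T := Submodule.map_subtype_le _ _
    have hKinvt : Invt ρX K := by
      intro g x hx
      obtain ⟨y, hy, rfl⟩ := Submodule.mem_map.mp hx
      refine Submodule.mem_map.mpr ⟨resRep ρX T hT g y, ?_, rfl⟩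
      have hy0 : φ y = 0 := hy
      show φ _ = 0
      rw [hφeqv.apply, hy0, map_zero]
    have hKne : K ≠ T := by
      intro h
      have : (⟨t, htT⟩ : T) ∈ LinearMap.ker φ := by
        have : t ∈ K := h ▸ htT
        obtain ⟨y, hy, hyt⟩ := this
        have : y = ⟨t, htT⟩ := Subtype.ext hyt
        exact this ▸ hy
      exact hφt (LinearMap.mem_ker.mp this)
    have hKbot : K = ⊥ := by
      by_contra h
      exact hKne (hmin K hKle hKinvt h)
    rw [← LinearMap.ker_eq_bot, eq_bot_iff]
    intro y hy
    have hyK : (y : X) ∈ K := Submodule.mem_map.mpr ⟨y, hy, rfl⟩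
    rw [hKbot] at hyK
    simp only [Submodule.mem_bot] at hyK ⊢
    exact Subtype.ext hyK
  have hsurj : Function.Surjective φ := by
    have hRinvt : Invt ρS (LinearMap.range φ) := by
      rintro g y ⟨x, rfl⟩
      exact ⟨resRep ρX T hT g x, hφeqv.apply g x⟩
    have hR0 : LinearMap.range φ ≠ ⊥ := by
      intro h
      rw [LinearMap.range_eq_bot] at h
      exact hφt (by rw [h]; rfl)
    rcases hsimple _ hRinvt with h | h
    · exact absurd h hR0
    · rw [← LinearMap.range_eq_top]; exact h
  exact ⟨LinearEquiv.ofBijective φ ⟨hinj, hsurj⟩, hφeqv⟩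

/-- relative complement: split an invariant submodule off an invariant submodule containing it -/
lemma rel_compl {T Y : Submodule ℝ X} (hTY : T ≤ Y) {C : Submodule ℝ X}
    (hC : IsCompl T C) :
    T ⊔ (C ⊓ Y) = Y ∧ T ⊓ (C ⊓ Y) = ⊥ ∧
      Module.finrank ℝ Y = Module.finrank ℝ T + Module.finrank ℝ (C ⊓ Y : Submodule ℝ X) := by
  have h1 : T ⊔ (C ⊓ Y) = Y := by
    have := sup_inf_assoc_of_le (x := T) C hTY
    rw [← this, codisjoint_iff.mp hC.codisjoint, top_inf_eq]
  have h2 : T ⊓ (C ⊓ Y) = ⊥ :=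
    eq_bot_iff.mpr (le_trans (inf_le_inf_left T inf_le_left) hC.disjoint.le_bot)
  refine ⟨h1, h2, ?_⟩
  have := Submodule.finrank_sup_add_finrank_inf_eq T (C ⊓ Y)
  rw [h1, h2] at this
  simp only [finrank_bot, add_zero] at this
  omega

/-- dimension of any invariant submodule is divisible by dim S -/
lemma dvd_finrank_invt (hsimple : ∀ A : Submodule ℝ S, Invt ρS A → A = ⊥ ∨ A = ⊤)
    (hιinj : Function.Injective ι) (hιeqv : Eqv ρX (ρpi ρS p) ι)
    (Y : Submodule ℝ X) (hY : Invt ρX Y) :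
    Module.finrank ℝ S ∣ Module.finrank ℝ Y := by
  obtain ⟨n, hn⟩ : ∃ n, Module.finrank ℝ Y = n := ⟨_, rfl⟩
  induction n using Nat.strong_induction_on generalizing Y with
  | _ n ih =>
    by_cases hY0 : Y = ⊥
    · rw [hY0, finrank_bot] at hn ⊢; exact ⟨0, by omega⟩
    · obtain ⟨T, hTle, hTinvt, hT0, hmin⟩ := exists_minimal (Invt ρX) Y hY hY0
      obtain ⟨f, -⟩ := minimal_iso_S hsimple hιinj hιeqv T hTinvt hT0 hmin
      have hdimT : Module.finrank ℝ T = Module.finrank ℝ S := f.finrank_eq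
      obtain ⟨C, hC, hCinvt⟩ := exists_invt_compl ρX T hTinvt
      have hD : Invt ρX (C ⊓ Y) := fun g x hx => ⟨hCinvt g x hx.1, hY g x hx.2⟩
      obtain ⟨-, -, h3⟩ := rel_compl hTle hC
      have hdpos : 0 < Module.finrank ℝ S := Module.finrank_pos
      have hlt : Module.finrank ℝ (C ⊓ Y : Submodule ℝ X) < n := by omega
      obtain ⟨k, hk⟩ := ih _ hlt (C ⊓ Y) hD rfl
      exact ⟨k + 1, by rw [h3, hk, hdimT]; ring⟩

/-- two contexts of equal dimension are equivariantly isomorphic -/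
lemma iso_of_finrank_eq
    {X' : Type} [AddCommGroup X'] [Module ℝ X'] [FiniteDimensional ℝ X']
    {ρX' : Representation ℝ G X'} {p' : ℕ} {ι' : X' →ₗ[ℝ] (Fin p' → S)}
    (hsimple : ∀ A : Submodule ℝ S, Invt ρS A → A = ⊥ ∨ A = ⊤)
    (hιinj : Function.Injective ι) (hιeqv : Eqv ρX (ρpi ρS p) ι)
    (hιinj' : Function.Injective ι') (hιeqv' : Eqv ρX' (ρpi ρS p') ι')
    (hrank : Module.finrank ℝ X = Module.finrank ℝ X') :
    ∃ f : X ≃ₗ[ℝ] X', Eqv ρX ρX' f.toLinearMap := by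
  obtain ⟨n, hn⟩ : ∃ n, Module.finrank ℝ X = n := ⟨_, rfl⟩
  induction n using Nat.strong_induction_on
    generalizing X X' with
  | _ n ih =>
    rcases Nat.eq_zero_or_pos n with h0 | hpos
    · subst h0
      have hX : Subsingleton X := by
        rw [← Module.finrank_zero_iff (R := ℝ)]; omega
      have hX' : Subsingleton X' := by
        rw [← Module.finrank_zero_iff (R := ℝ)]; omega
      refine ⟨LinearEquiv.ofFinrankEq _ _ (by omega), fun g => ?_⟩
      ext x
      exact Subsingleton.elim _ _
    · have hXnontriv : Nontrivial X := (Module.finrank_pos_iff (R := ℝ) (M := X)).mp (by omega)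
      have hXnontriv' : Nontrivial X' := (Module.finrank_pos_iff (R := ℝ) (M := X')).mp (by omega)
      have htop0 : (⊤ : Submodule ℝ X) ≠ ⊥ := top_ne_bot
      have htop0' : (⊤ : Submodule ℝ X') ≠ ⊥ := top_ne_bot
      obtain ⟨T, -, hTinvt, hT0, hmin⟩ :=
        exists_minimal (Invt ρX) ⊤ (fun g x _ => trivial) htop0
      obtain ⟨T', -, hTinvt', hT0', hmin'⟩ :=
        exists_minimal (Invt ρX') ⊤ (fun g x _ => trivial) htop0'
      obtain ⟨fT, hfT⟩ := minimal_iso_S hsimple hιinj hιeqv T hTinvt hT0 hmin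
      obtain ⟨fT', hfT'⟩ := minimal_iso_S hsimple hιinj' hιeqv' T' hTinvt' hT0' hmin'
      obtain ⟨C, hC, hCinvt⟩ := exists_invt_compl ρX T hTinvt
      obtain ⟨C', hC', hCinvt'⟩ := exists_invt_compl ρX' T' hTinvt'
      have hdimT : Module.finrank ℝ T = Module.finrank ℝ S := fT.finrank_eq
      have hdimT' : Module.finrank ℝ T' = Module.finrank ℝ S := fT'.finrank_eq
      have hsum : Module.finrank ℝ T + Module.finrank ℝ C = Module.finrank ℝ X :=
        Submodule.finrank_add_eq_of_isCompl hC
      have hsum' : Module.finrank ℝ T' + Module.finrank ℝ C' = Module.finrank ℝ X' :=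
        Submodule.finrank_add_eq_of_isCompl hC'
      have hdpos : 0 < Module.finrank ℝ S := Module.finrank_pos
      -- recurse on the complements
      obtain ⟨fC, hfC⟩ := ih (Module.finrank ℝ C) (by omega)
        (ρX := resRep ρX C hCinvt) (ι := ι ∘ₗ C.subtype)
        (ρX' := resRep ρX' C' hCinvt') (ι' := ι' ∘ₗ C'.subtype)
        (hιinj.comp C.injective_subtype)
        (fun g => by ext x; simp only [LinearMap.comp_apply, Submodule.coe_subtype,
          resRep_coe]; rw [hιeqv.apply])
        (hιinj'.comp C'.injective_subtype)
        (fun g => by ext x; simp only [LinearMap.comp_apply, Submodule.coe_subtype,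
          resRep_coe]; rw [hιeqv'.apply])
        (by omega) rfl
      set F : X ≃ₗ[ℝ] X' :=
        (Submodule.prodEquivOfIsCompl T C hC).symm.trans
          (((fT.trans fT'.symm).prodCongr fC).trans (Submodule.prodEquivOfIsCompl T' C' hC'))
        with hF
      have hFT : ∀ a : T, F (a : X) = ((fT'.symm (fT a) : T') : X') := by
        intro a
        simp only [hF, LinearEquiv.trans_apply,
          Submodule.prodEquivOfIsCompl_symm_apply_left, LinearEquiv.prodCongr_apply,
          LinearEquiv.trans_apply, map_zero, Submodule.coe_prodEquivOfIsCompl',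
          Submodule.coe_zero, add_zero]
      have hFC : ∀ b : C, F (b : X) = ((fC b : C') : X') := by
        intro b
        simp only [hF, LinearEquiv.trans_apply,
          Submodule.prodEquivOfIsCompl_symm_apply_right, LinearEquiv.prodCongr_apply,
          LinearEquiv.trans_apply, map_zero, Submodule.coe_prodEquivOfIsCompl',
          Submodule.coe_zero, zero_add]
      refine ⟨F, fun g => ?_⟩
      rw [← LinearMap.cancel_right
        (show Function.Surjective (Submodule.prodEquivOfIsCompl T C hC) from
          (Submodule.prodEquivOfIsCompl T C hC).surjective)]
      ext ab
      · have key := (Eqv.comp hfT (Eqv.symm hfT')).apply g ab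
        simp only [LinearMap.comp_apply, LinearEquiv.coe_coe] at key
        simp only [LinearMap.comp_apply, LinearMap.inl_apply,
          Submodule.coe_prodEquivOfIsCompl', Submodule.coe_zero, add_zero,
          LinearEquiv.coe_coe]
        have h1 : ρX g (ab : X) = ((resRep ρX T hTinvt g ab : ↥T) : X) := rfl
        rw [h1, hFT, hFT, key, resRep_coe]
      · have key := hfC.apply g ab
        simp only [LinearMap.comp_apply, LinearEquiv.coe_coe] at key
        simp only [LinearMap.comp_apply, LinearMap.inr_apply,
          Submodule.coe_prodEquivOfIsCompl', Submodule.coe_zero, zero_add,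
          LinearEquiv.coe_coe]
        have h1 : ρX g (ab : X) = ((resRep ρX C hCinvt g ab : ↥C) : X) := rfl
        rw [h1, hFC, hFC, key, resRep_coe]

end homog

section sigma
variable {S : Type} [AddCommGroup S] [Module ℝ S] [FiniteDimensional ℝ S] [Nontrivial S]
variable {ρS : Representation ℝ G S}

/-- the model complex structure on S × S -/
def Jsig : ((Fin 2 → S) →ₗ[ℝ] (Fin 2 → S)) :=
  LinearMap.pi (fun i : Fin 2 =>
    if i.val = 0 then -(LinearMap.proj (1 : Fin 2)) else LinearMap.proj (0 : Fin 2))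

@[simp] lemma Jsig_apply_zero (x : Fin 2 → S) : Jsig x 0 = -(x 1) := rfl
@[simp] lemma Jsig_apply_one (x : Fin 2 → S) : Jsig x 1 = x 0 := rfl

lemma Jsig_sq : (Jsig (S := S)) ∘ₗ Jsig = -LinearMap.id := by
  refine LinearMap.ext fun x => ?_
  funext i
  fin_cases i <;>
    simp only [LinearMap.comp_apply, Jsig_apply_zero, Jsig_apply_one,
      LinearMap.neg_apply, LinearMap.id_apply, neg_neg] <;> rfl

lemma Jsig_comm (g : G) : (Jsig (S := S)) ∘ₗ ρpi ρS 2 g = ρpi ρS 2 g ∘ₗ Jsig := by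
  refine LinearMap.ext fun x => ?_
  funext i
  fin_cases i
  · show Jsig ((ρpi ρS 2 g) x) 0 = ρS g (Jsig x 0)
    simp only [Jsig_apply_zero, ρpi_apply, map_neg]
  · show Jsig ((ρpi ρS 2 g) x) 1 = ρS g (Jsig x 1)
    simp only [Jsig_apply_one, ρpi_apply]

lemma finrank_sigma : Module.finrank ℝ (Fin 2 → S) = 2 * Module.finrank ℝ S := by
  simp [Module.finrank_pi_fintype]

/-- any two minimal nonzero (G,J)-invariant subspaces of the model Σ have the same
dimension -/
lemma sigma_simple_dim_eq
    (hsimple : ∀ A : Submodule ℝ S, Invt ρS A → A = ⊥ ∨ A = ⊤)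
    (A B : Submodule ℝ (Fin 2 → S))
    (hAG : Invt (ρpi ρS 2) A) (hAJ : JInvt Jsig A) (hA0 : A ≠ ⊥)
    (hAmin : ∀ A' ≤ A, (Invt (ρpi ρS 2) A' ∧ JInvt Jsig A') → A' ≠ ⊥ → A' = A)
    (hBG : Invt (ρpi ρS 2) B) (hBJ : JInvt Jsig B) (hB0 : B ≠ ⊥)
    (hBmin : ∀ B' ≤ B, (Invt (ρpi ρS 2) B' ∧ JInvt Jsig B') → B' ≠ ⊥ → B' = B) :
    Module.finrank ℝ A = Module.finrank ℝ B := by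
  have hid : Function.Injective (LinearMap.id : (Fin 2 → S) →ₗ[ℝ] (Fin 2 → S)) :=
    fun a b h => h
  have hideqv : Eqv (ρpi ρS 2) (ρpi ρS 2) LinearMap.id := fun g => by
    ext x; simp
  have hdvd : ∀ (Y : Submodule ℝ (Fin 2 → S)), Invt (ρpi ρS 2) Y →
      Module.finrank ℝ S ∣ Module.finrank ℝ Y := fun Y hY =>
    dvd_finrank_invt hsimple hid hideqv Y hY
  have hd := Module.finrank_pos (R := ℝ) (M := S)
  have htotal : ∀ (Y : Submodule ℝ (Fin 2 → S)), Invt (ρpi ρS 2) Y → Y ≠ ⊥ →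
      Module.finrank ℝ Y = Module.finrank ℝ S ∨ Y = ⊤ := by
    intro Y hY hY0
    obtain ⟨k, hk⟩ := hdvd Y hY
    have h1 : Module.finrank ℝ Y ≤ 2 * Module.finrank ℝ S := by
      rw [← finrank_sigma]; exact Submodule.finrank_le Y
    have h2 : 0 < Module.finrank ℝ Y := by
      have : Nontrivial Y := Submodule.nontrivial_iff_ne_bot.mpr hY0
      exact Module.finrank_pos
    have hk1 : k = 1 ∨ k = 2 := by
      rcases k with _ | _ | _ | k
      · omega
      · left; rfl
      · right; rfl
      · exfalso
        have h3 : Module.finrank ℝ S * 3 ≤ Module.finrank ℝ S * (k + 1 + 1 + 1) :=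
          Nat.mul_le_mul_left _ (by omega)
        omega
    rcases hk1 with rfl | rfl
    · left; omega
    · right
      refine Submodule.eq_top_of_finrank_eq ?_
      rw [hk, finrank_sigma]; ring
  rcases htotal A hAG hA0 with hA | hA <;> rcases htotal B hBG hB0 with hB | hB
  · rw [hA, hB]
  · rw [hBmin A (by rw [hB]; exact le_top) ⟨hAG, hAJ⟩ hA0]
  · rw [← hAmin B (by rw [hA]; exact le_top) ⟨hBG, hBJ⟩ hB0]
  · rw [hA, hB]
end sigma
section uniform
variable {S : Type} [AddCommGroup S] [Module ℝ S] [FiniteDimensional ℝ S] [Nontrivial S]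
variable {ρS : Representation ℝ G S}
variable {X : Type} [AddCommGroup X] [Module ℝ X] [FiniteDimensional ℝ X]
variable {ρX : Representation ℝ G X} {p : ℕ} {ι : X →ₗ[ℝ] (Fin p → S)}

/-- any minimal nonzero (G,J)-invariant subspace of a context embeds into the model Σ
as a minimal nonzero (G,Jsig)-invariant subspace of the same dimension -/
lemma simple_embeds_sigma {JX : X →ₗ[ℝ] X}
    (hJG : ∀ g, JX ∘ₗ ρX g = ρX g ∘ₗ JX) (hJsq : JX ∘ₗ JX = -LinearMap.id)
    (hιinj : Function.Injective ι) (hιeqv : Eqv ρX (ρpi ρS p) ι)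
    (T : Submodule ℝ X) (hTG : Invt ρX T) (hTJ : JInvt JX T) (hT0 : T ≠ ⊥)
    (hmin : ∀ T' ≤ T, (Invt ρX T' ∧ JInvt JX T') → T' ≠ ⊥ → T' = T) :
    ∃ B : Submodule ℝ (Fin 2 → S), Invt (ρpi ρS 2) B ∧ JInvt Jsig B ∧ B ≠ ⊥ ∧
      (∀ B' ≤ B, (Invt (ρpi ρS 2) B' ∧ JInvt Jsig B') → B' ≠ ⊥ → B' = B) ∧
      Module.finrank ℝ T = Module.finrank ℝ B := by
  obtain ⟨t, htT, ht0⟩ := Submodule.exists_mem_ne_zero_of_ne_bot hT0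
  have hιt : ι t ≠ 0 := fun h => ht0 (hιinj (by rw [h, map_zero]))
  obtain ⟨i, hi⟩ : ∃ i, ι t i ≠ 0 := by
    by_contra h; push_neg at h; exact hιt (funext h)
  set f : T →ₗ[ℝ] S := (LinearMap.proj i) ∘ₗ ι ∘ₗ T.subtype with hf
  have hfeqv : ∀ g (x : T), f (resRep ρX T hTG g x) = ρS g (f x) := by
    intro g x
    simp only [hf, LinearMap.comp_apply, LinearMap.proj_apply, Submodule.coe_subtype,
      resRep_coe]
    rw [hιeqv.apply g]
    simp only [ρpi_apply]
  set Jres : T →ₗ[ℝ] T := JX.restrict (p := T) (q := T) hTJ with hJres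
  have hJres_coe : ∀ x : T, (Jres x : X) = JX x := fun x => rfl
  have hJres_sq : ∀ x : T, Jres (Jres x) = -x := by
    intro x
    refine Subtype.ext ?_
    rw [hJres_coe, hJres_coe]
    have := congrArg (fun F => F (x : X)) hJsq
    simpa using this
  have hJres_comm : ∀ g (x : T), Jres (resRep ρX T hTG g x) = resRep ρX T hTG g (Jres x) := by
    intro g x
    refine Subtype.ext ?_
    rw [hJres_coe, resRep_coe, resRep_coe, hJres_coe]
    have := congrArg (fun F => F (x : X)) (hJG g)
    simpa using this
  -- the embedding T → Σ
  set F : T →ₗ[ℝ] (Fin 2 → S) :=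
    LinearMap.pi (fun j : Fin 2 =>
      if j.val = 0 then f else -(f ∘ₗ Jres)) with hF
  have hF0 : ∀ x : T, F x 0 = f x := fun x => rfl
  have hF1 : ∀ x : T, F x 1 = -(f (Jres x)) := fun x => rfl
  have hFJ : ∀ x : T, F (Jres x) = Jsig (F x) := by
    intro x
    funext j
    fin_cases j
    · show F (Jres x) 0 = Jsig (F x) 0
      rw [hF0, Jsig_apply_zero, hF1, neg_neg]
    · show F (Jres x) 1 = Jsig (F x) 1
      rw [hF1, Jsig_apply_one, hF0, hJres_sq, map_neg, neg_neg]
  have hFG : ∀ g (x : T), F (resRep ρX T hTG g x) = ρpi ρS 2 g (F x) := by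
    intro g x
    funext j
    fin_cases j
    · show F (resRep ρX T hTG g x) 0 = ρS g (F x 0)
      rw [hF0, hF0, hfeqv]
    · show F (resRep ρX T hTG g x) 1 = ρS g (F x 1)
      rw [hF1, hF1, hJres_comm, hfeqv, map_neg]
  have hFt : F ⟨t, htT⟩ ≠ 0 := by
    intro h
    have := congrFun h 0
    rw [hF0] at this
    exact hi this
  -- injectivity via minimality
  have hFinj : Function.Injective F := by
    set K : Submodule ℝ X := (LinearMap.ker F).map T.subtype with hK
    have hKle : K ≤ T := Submodule.map_subtype_le _ _
    have hKG : Invt ρX K := by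
      intro g x hx
      obtain ⟨y, hy, rfl⟩ := Submodule.mem_map.mp hx
      refine Submodule.mem_map.mpr ⟨resRep ρX T hTG g y, ?_, rfl⟩
      have hy0 : F y = 0 := hy
      show F _ = 0
      rw [hFG, hy0, map_zero]
    have hKJ : JInvt JX K := by
      intro x hx
      obtain ⟨y, hy, rfl⟩ := Submodule.mem_map.mp hx
      refine Submodule.mem_map.mpr ⟨Jres y, ?_, rfl⟩
      have hy0 : F y = 0 := hy
      show F _ = 0
      rw [hFJ, hy0, map_zero]
    have hKne : K ≠ T := by
      intro h
      have htK : t ∈ K := h ▸ htT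
      obtain ⟨y, hy, hyt⟩ := Submodule.mem_map.mp htK
      have hyy : y = ⟨t, htT⟩ := Subtype.ext hyt
      exact hFt (by rw [← hyy]; exact hy)
    have hKbot : K = ⊥ := by
      by_contra h
      exact hKne (hmin K hKle ⟨hKG, hKJ⟩ h)
    rw [← LinearMap.ker_eq_bot, eq_bot_iff]
    intro y hy
    have hyK : (y : X) ∈ K := Submodule.mem_map.mpr ⟨y, hy, rfl⟩
    rw [hKbot] at hyK
    simp only [Submodule.mem_bot] at hyK ⊢
    exact Subtype.ext hyK
  refine ⟨LinearMap.range F, ?_, ?_, ?_, ?_, ?_⟩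
  · rintro g y ⟨x, rfl⟩
    exact ⟨resRep ρX T hTG g x, hFG g x⟩
  · rintro y ⟨x, rfl⟩
    exact ⟨Jres x, hFJ x⟩
  · intro h
    rw [LinearMap.range_eq_bot] at h
    exact hFt (by rw [h]; rfl)
  · rintro B' hB'le ⟨hB'G, hB'J⟩ hB'0
    set K' : Submodule ℝ X := (B'.comap F).map T.subtype with hK'
    have hK'le : K' ≤ T := Submodule.map_subtype_le _ _
    have hK'G : Invt ρX K' := by
      intro g x hx
      obtain ⟨y, hy, rfl⟩ := Submodule.mem_map.mp hx
      refine Submodule.mem_map.mpr ⟨resRep ρX T hTG g y, ?_, rfl⟩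
      show F _ ∈ B'
      rw [hFG]
      exact hB'G g _ hy
    have hK'J : JInvt JX K' := by
      intro x hx
      obtain ⟨y, hy, rfl⟩ := Submodule.mem_map.mp hx
      refine Submodule.mem_map.mpr ⟨Jres y, ?_, rfl⟩
      show F _ ∈ B'
      rw [hFJ]
      exact hB'J _ hy
    have hK'0 : K' ≠ ⊥ := by
      obtain ⟨b, hbB', hb0⟩ := Submodule.exists_mem_ne_zero_of_ne_bot hB'0
      obtain ⟨y, rfl⟩ := hB'le hbB'
      intro h
      have hyK' : (y : X) ∈ K' := Submodule.mem_map.mpr ⟨y, hbB', rfl⟩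
      rw [h, Submodule.mem_bot] at hyK'
      have : y = 0 := Subtype.ext hyK'
      exact hb0 (by rw [this, map_zero])
    have hK'T : K' = T := hmin K' hK'le ⟨hK'G, hK'J⟩ hK'0
    -- conclude B' = range F
    refine le_antisymm hB'le ?_
    rintro y ⟨x, rfl⟩
    have hxK' : (x : X) ∈ K' := hK'T.symm ▸ x.2
    obtain ⟨z, hz, hzx⟩ := Submodule.mem_map.mp hxK'
    have : z = x := Subtype.ext hzx
    rw [← this]
    exact hz
  · exact (LinearMap.finrank_range_of_inj hFinj).symm

end uniform
section counting
variable {X : Type} [AddCommGroup X] [Module ℝ X] [FiniteDimensional ℝ X]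
variable {ρX : Representation ℝ G X}

lemma Invt_sup {A B : Submodule ℝ X} (hA : Invt ρX A) (hB : Invt ρX B) :
    Invt ρX (A ⊔ B) := by
  intro g x hx
  obtain ⟨a, ha, b, hb, rfl⟩ := Submodule.mem_sup.mp hx
  rw [map_add]
  exact Submodule.add_mem_sup (hA g a ha) (hB g b hb)

lemma JInvt_sup {JX : X →ₗ[ℝ] X} {A B : Submodule ℝ X} (hA : JInvt JX A)
    (hB : JInvt JX B) : JInvt JX (A ⊔ B) := by
  intro x hx
  obtain ⟨a, ha, b, hb, rfl⟩ := Submodule.mem_sup.mp hx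
  rw [map_add]
  exact Submodule.add_mem_sup (hA a ha) (hB b hb)

lemma finrank_pos_of_ne_bot {A : Submodule ℝ X} (hA : A ≠ ⊥) :
    0 < Module.finrank ℝ A := by
  have : Nontrivial A := Submodule.nontrivial_iff_ne_bot.mpr hA
  exact Module.finrank_pos

lemma c_dvd_finrank {JX : X →ₗ[ℝ] X}
    (hJG : ∀ g, JX ∘ₗ ρX g = ρX g ∘ₗ JX) (hJsq : JX ∘ₗ JX = -LinearMap.id) {c : ℕ}
    (hc : ∀ T : Submodule ℝ X, Invt ρX T → JInvt JX T → T ≠ ⊥ →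
      (∀ T' ≤ T, (Invt ρX T' ∧ JInvt JX T') → T' ≠ ⊥ → T' = T) →
      Module.finrank ℝ T = c)
    (Y : Submodule ℝ X) (hYG : Invt ρX Y) (hYJ : JInvt JX Y) :
    c ∣ Module.finrank ℝ Y := by
  obtain ⟨n, hn⟩ : ∃ n, Module.finrank ℝ Y = n := ⟨_, rfl⟩
  induction n using Nat.strong_induction_on generalizing Y with
  | _ n ih =>
    by_cases hY0 : Y = ⊥
    · rw [hY0, finrank_bot]
      exact dvd_zero c
    · obtain ⟨T, hTle, ⟨hTG, hTJ⟩, hT0, hmin⟩ :=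
        exists_minimal (fun A => Invt ρX A ∧ JInvt JX A) Y ⟨hYG, hYJ⟩ hY0
      have hdimT : Module.finrank ℝ T = c := hc T hTG hTJ hT0 hmin
      obtain ⟨C, hC, hCG, hCJ⟩ := exists_invt_compl_J ρX JX hJG hJsq T hTG hTJ
      have hDG : Invt ρX (C ⊓ Y) := fun g x hx => ⟨hCG g x hx.1, hYG g x hx.2⟩
      have hDJ : JInvt JX (C ⊓ Y) := fun x hx => ⟨hCJ x hx.1, hYJ x hx.2⟩
      obtain ⟨-, -, h3⟩ := rel_compl hTle hC
      have hTpos : 0 < Module.finrank ℝ T := finrank_pos_of_ne_bot hT0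
      obtain ⟨k, hk⟩ := ih _ (by omega) (C ⊓ Y) hDG hDJ rfl
      exact ⟨k + 1, by rw [h3, hk, hdimT]; ring⟩

lemma exists_invt_finrank_eq {JX : X →ₗ[ℝ] X}
    (hJG : ∀ g, JX ∘ₗ ρX g = ρX g ∘ₗ JX) (hJsq : JX ∘ₗ JX = -LinearMap.id) {c : ℕ}
    (hc : ∀ T : Submodule ℝ X, Invt ρX T → JInvt JX T → T ≠ ⊥ →
      (∀ T' ≤ T, (Invt ρX T' ∧ JInvt JX T') → T' ≠ ⊥ → T' = T) →
      Module.finrank ℝ T = c)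
    (m : ℕ) (hdvd : c ∣ m) (hle : m ≤ Module.finrank ℝ X) :
    ∃ U : Submodule ℝ X, Invt ρX U ∧ JInvt JX U ∧ Module.finrank ℝ U = m := by
  induction m using Nat.strong_induction_on with
  | _ m ih =>
    rcases Nat.eq_zero_or_pos m with rfl | hm
    · refine ⟨⊥, ?_, ?_, finrank_bot ℝ X⟩
      · intro g x hx
        rw [Submodule.mem_bot] at hx ⊢
        rw [hx, map_zero]
      · intro x hx
        rw [Submodule.mem_bot] at hx ⊢
        rw [hx, map_zero]
    · have hcpos : 0 < c := by
        rcases Nat.eq_zero_or_pos c with rfl | h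
        · obtain ⟨k, hk⟩ := hdvd; omega
        · exact h
      obtain ⟨k, hk⟩ := hdvd
      have hk1 : 1 ≤ k := by
        rcases Nat.eq_zero_or_pos k with rfl | h
        · omega
        · exact h
      obtain ⟨k', rfl⟩ : ∃ k', k = k' + 1 := ⟨k - 1, by omega⟩
      have hm' : m = c * k' + c := by rw [hk, Nat.mul_succ]
      obtain ⟨U', hU'G, hU'J, hU'rank⟩ :=
        ih (m - c) (by omega) ⟨k', by omega⟩ (by omega)
      obtain ⟨C, hC, hCG, hCJ⟩ := exists_invt_compl_J ρX JX hJG hJsq U' hU'G hU'J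
      have hsum : Module.finrank ℝ U' + Module.finrank ℝ C = Module.finrank ℝ X :=
        Submodule.finrank_add_eq_of_isCompl hC
      have hC0 : C ≠ ⊥ := by
        intro h
        rw [h, finrank_bot] at hsum
        omega
      obtain ⟨T, hTle, ⟨hTG, hTJ⟩, hT0, hmin⟩ :=
        exists_minimal (fun A => Invt ρX A ∧ JInvt JX A) C ⟨hCG, hCJ⟩ hC0
      have hdimT : Module.finrank ℝ T = c := hc T hTG hTJ hT0 hmin
      refine ⟨U' ⊔ T, Invt_sup hU'G hTG, JInvt_sup hU'J hTJ, ?_⟩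
      have hinf : U' ⊓ T = ⊥ :=
        eq_bot_iff.mpr (le_trans (inf_le_inf_left U' hTle) hC.disjoint.le_bot)
      have := Submodule.finrank_sup_add_finrank_inf_eq U' T
      rw [hinf] at this
      simp only [finrank_bot, add_zero] at this
      omega

end counting
section glue
variable {X : Type} [AddCommGroup X] [Module ℝ X] [FiniteDimensional ℝ X]
variable {ρX : Representation ℝ G X}

/-- glue equivariant isomorphisms on complementary invariant submodules into an
equivariant automorphism -/
lemma glue_autom (U W' Uc Wc : Submodule ℝ X)
    (hUG : Invt ρX U) (hWG : Invt ρX W') (hUcG : Invt ρX Uc) (hWcG : Invt ρX Wc)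
    (hU : IsCompl U Uc) (hW : IsCompl W' Wc)
    (ψ : U ≃ₗ[ℝ] W') (hψ : Eqv (resRep ρX U hUG) (resRep ρX W' hWG) ψ.toLinearMap)
    (β : Uc ≃ₗ[ℝ] Wc) (hβ : Eqv (resRep ρX Uc hUcG) (resRep ρX Wc hWcG) β.toLinearMap) :
    ∃ φ : X ≃ₗ[ℝ] X, Eqv ρX ρX φ.toLinearMap ∧ (∀ u : U, φ (u : X) = ((ψ u : W') : X)) := by
  set F : X ≃ₗ[ℝ] X :=
    (Submodule.prodEquivOfIsCompl U Uc hU).symm.trans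
      ((ψ.prodCongr β).trans (Submodule.prodEquivOfIsCompl W' Wc hW)) with hF
  have hFU : ∀ a : U, F (a : X) = ((ψ a : W') : X) := by
    intro a
    simp only [hF, LinearEquiv.trans_apply, Submodule.prodEquivOfIsCompl_symm_apply_left,
      LinearEquiv.prodCongr_apply, map_zero, Submodule.coe_prodEquivOfIsCompl',
      Submodule.coe_zero, add_zero]
  have hFUc : ∀ b : Uc, F (b : X) = ((β b : Wc) : X) := by
    intro b
    simp only [hF, LinearEquiv.trans_apply, Submodule.prodEquivOfIsCompl_symm_apply_right,
      LinearEquiv.prodCongr_apply, map_zero, Submodule.coe_prodEquivOfIsCompl',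
      Submodule.coe_zero, zero_add]
  refine ⟨F, fun g => ?_, hFU⟩
  rw [← LinearMap.cancel_right
    (show Function.Surjective (Submodule.prodEquivOfIsCompl U Uc hU) from
      (Submodule.prodEquivOfIsCompl U Uc hU).surjective)]
  ext ab
  · have key := hψ.apply g ab
    simp only [LinearMap.comp_apply, LinearEquiv.coe_coe] at key
    simp only [LinearMap.comp_apply, LinearMap.inl_apply,
      Submodule.coe_prodEquivOfIsCompl', Submodule.coe_zero, add_zero,
      LinearEquiv.coe_coe]
    have h1 : ρX g (ab : X) = ((resRep ρX U hUG g ab : U) : X) := rfl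
    rw [h1, hFU, hFU, key, resRep_coe]
  · have key := hβ.apply g ab
    simp only [LinearMap.comp_apply, LinearEquiv.coe_coe] at key
    simp only [LinearMap.comp_apply, LinearMap.inr_apply,
      Submodule.coe_prodEquivOfIsCompl', Submodule.coe_zero, zero_add,
      LinearEquiv.coe_coe]
    have h1 : ρX g (ab : X) = ((resRep ρX Uc hUcG g ab : Uc) : X) := rfl
    rw [h1, hFUc, hFUc, key, resRep_coe]

end glue
end CSAux

/-- Let `V` be a homogeneous real representation of a finite group `G` with a complex
structure `J`, and let `W ⊆ V` be a `G`-submodule that itself admits a complex structure.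
Then there exists a complex structure `J'` on `V` with `J'(W) = W` and with
`V_J^{1,0} ≅ V_{J'}^{1,0}` as `ℂG`-modules. -/
theorem exists_complex_structure_preserving_submodule
    {G : Type} [Group G] [Fintype G]
    (V : Type) [AddCommGroup V] [Module ℝ V] [FiniteDimensional ℝ V]
    (ρ : Representation ℝ G V)
    (S : Type) [AddCommGroup S] [Module ℝ S] [FiniteDimensional ℝ S] [Nontrivial S]
    (ρS : Representation ℝ G S)
    -- `S` is simple
    (hsimple : ∀ W : Submodule ℝ S, (∀ g : G, ∀ x ∈ W, ρS g x ∈ W) → W = ⊥ ∨ W = ⊤)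
    -- `V` is homogeneous with simple component `S`
    (hhom : ∃ (n : ℕ) (e : V ≃ₗ[ℝ] (Fin n → S)),
      ∀ (g : G) (x : V) (i : Fin n), e (ρ g x) i = ρS g (e x i))
    (J : V →ₗ[ℝ] V)
    (hJG : ∀ g : G, J ∘ₗ ρ g = ρ g ∘ₗ J) (hJ : J ∘ₗ J = -LinearMap.id)
    (W : Submodule ℝ V) (hWG : ∀ g : G, ∀ x ∈ W, ρ g x ∈ W)
    -- `W` admits a complex structure
    (hWc : ∃ JW : W →ₗ[ℝ] W,
      (∀ (g : G) (x : W) (h : ρ g ↑x ∈ W), (JW ⟨ρ g ↑x, h⟩ : V) = ρ g ↑(JW x)) ∧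
      JW ∘ₗ JW = -LinearMap.id) :
    ∃ J' : V →ₗ[ℝ] V,
      (∀ g : G, J' ∘ₗ ρ g = ρ g ∘ₗ J') ∧
      J' ∘ₗ J' = -LinearMap.id ∧
      W.map J' = W ∧
      ∃ e : Module.End.eigenspace (J.baseChange ℂ) Complex.I ≃ₗ[ℂ]
            Module.End.eigenspace (J'.baseChange ℂ) Complex.I,
        ∀ (g : G) (x : Module.End.eigenspace (J.baseChange ℂ) Complex.I)
          (hg : (ρ g).baseChange ℂ ↑x ∈ Module.End.eigenspace (J.baseChange ℂ) Complex.I),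
          (e ⟨(ρ g).baseChange ℂ ↑x, hg⟩ : ℂ ⊗[ℝ] V) = (ρ g).baseChange ℂ ↑(e x) := by
  classical
  obtain ⟨n, e, he⟩ := hhom
  obtain ⟨JW, hJWeq, hJWsq⟩ := hWc
  have heqv : CSAux.Eqv ρ (CSAux.ρpi ρS n) e.toLinearMap := by
    intro g
    refine LinearMap.ext fun x => funext fun i => ?_
    simp only [LinearMap.comp_apply, LinearEquiv.coe_coe, CSAux.ρpi_apply]
    exact he g x i
  have heinj : Function.Injective (e.toLinearMap : V →ₗ[ℝ] (Fin n → S)) := e.injective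
  have hWG' : CSAux.Invt ρ W := hWG
  set ρW := CSAux.resRep ρ W hWG' with hρW
  have hJWG : ∀ g, JW ∘ₗ ρW g = ρW g ∘ₗ JW := by
    intro g; ext x
    simp only [LinearMap.comp_apply]
    calc ((JW (ρW g x)) : V) = (JW ⟨ρ g ↑x, hWG g ↑x x.2⟩ : V) := rfl
      _ = ρ g ↑(JW x) := hJWeq g x (hWG g ↑x x.2)
      _ = ((ρW g (JW x)) : V) := rfl
  -- the model minimal submodule and the uniform complex-simple dimension c
  obtain ⟨TS, -, ⟨hTSG, hTSJ⟩, hTS0, hTSmin⟩ :=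
    CSAux.exists_minimal
      (fun A => CSAux.Invt (CSAux.ρpi ρS 2) A ∧ CSAux.JInvt CSAux.Jsig A)
      ⊤ ⟨fun g x _ => trivial, fun x _ => trivial⟩ top_ne_bot
  set c := Module.finrank ℝ TS with hcdef
  have hcV : ∀ T : Submodule ℝ V, CSAux.Invt ρ T → CSAux.JInvt J T → T ≠ ⊥ →
      (∀ T' ≤ T, (CSAux.Invt ρ T' ∧ CSAux.JInvt J T') → T' ≠ ⊥ → T' = T) →
      Module.finrank ℝ T = c := by
    intro T h1 h2 h3 h4
    obtain ⟨B, hBG, hBJ, hB0, hBmin, hTB⟩ :=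
      CSAux.simple_embeds_sigma (ρS := ρS) hJG hJ heinj heqv T h1 h2 h3 h4
    rw [hTB, hcdef]
    exact CSAux.sigma_simple_dim_eq hsimple B TS hBG hBJ hB0 hBmin hTSG hTSJ hTS0 hTSmin
  have hWιinj : Function.Injective (e.toLinearMap ∘ₗ W.subtype) :=
    heinj.comp W.injective_subtype
  have hWιeqv : CSAux.Eqv ρW (CSAux.ρpi ρS n) (e.toLinearMap ∘ₗ W.subtype) := by
    intro g
    refine LinearMap.ext fun x => funext fun i => ?_
    simp only [LinearMap.comp_apply, Submodule.coe_subtype, CSAux.resRep_coe,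
      LinearEquiv.coe_coe, CSAux.ρpi_apply]
    exact he g ↑x i
  have hcW : ∀ T : Submodule ℝ W, CSAux.Invt ρW T → CSAux.JInvt JW T → T ≠ ⊥ →
      (∀ T' ≤ T, (CSAux.Invt ρW T' ∧ CSAux.JInvt JW T') → T' ≠ ⊥ → T' = T) →
      Module.finrank ℝ T = c := by
    intro T h1 h2 h3 h4
    obtain ⟨B, hBG, hBJ, hB0, hBmin, hTB⟩ :=
      CSAux.simple_embeds_sigma (ρS := ρS) hJWG hJWsq hWιinj hWιeqv T h1 h2 h3 h4
    rw [hTB, hcdef]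
    exact CSAux.sigma_simple_dim_eq hsimple B TS hBG hBJ hB0 hBmin hTSG hTSJ hTS0 hTSmin
  -- c divides dim W
  have hdvdW : c ∣ Module.finrank ℝ W := by
    have h := CSAux.c_dvd_finrank (ρX := ρW) hJWG hJWsq hcW ⊤
      (fun g x _ => trivial) (fun x _ => trivial)
    rwa [finrank_top] at h
  -- find a (G,J)-invariant U of the same dimension as W
  obtain ⟨U, hUG, hUJ, hUrank⟩ :=
    CSAux.exists_invt_finrank_eq hJG hJ hcV (Module.finrank ℝ W) hdvdW
      (Submodule.finrank_le W)
  -- equivariant isomorphism U ≃ W and of the complements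
  have hUιinj : Function.Injective (e.toLinearMap ∘ₗ U.subtype) :=
    heinj.comp U.injective_subtype
  have hUιeqv : CSAux.Eqv (CSAux.resRep ρ U hUG) (CSAux.ρpi ρS n)
      (e.toLinearMap ∘ₗ U.subtype) := by
    intro g
    refine LinearMap.ext fun x => funext fun i => ?_
    simp only [LinearMap.comp_apply, Submodule.coe_subtype, CSAux.resRep_coe,
      LinearEquiv.coe_coe, CSAux.ρpi_apply]
    exact he g ↑x i
  obtain ⟨ψ, hψ⟩ := CSAux.iso_of_finrank_eq hsimple hUιinj hUιeqv hWιinj hWιeqv hUrank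
  obtain ⟨Uc, hUcC, hUcG⟩ := CSAux.exists_invt_compl ρ U hUG
  obtain ⟨Wc, hWcC, hWcG⟩ := CSAux.exists_invt_compl ρ W hWG'
  have hUcιinj : Function.Injective (e.toLinearMap ∘ₗ Uc.subtype) :=
    heinj.comp Uc.injective_subtype
  have hUcιeqv : CSAux.Eqv (CSAux.resRep ρ Uc hUcG) (CSAux.ρpi ρS n)
      (e.toLinearMap ∘ₗ Uc.subtype) := by
    intro g
    refine LinearMap.ext fun x => funext fun i => ?_
    simp only [LinearMap.comp_apply, Submodule.coe_subtype, CSAux.resRep_coe,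
      LinearEquiv.coe_coe, CSAux.ρpi_apply]
    exact he g ↑x i
  have hWcιinj : Function.Injective (e.toLinearMap ∘ₗ Wc.subtype) :=
    heinj.comp Wc.injective_subtype
  have hWcιeqv : CSAux.Eqv (CSAux.resRep ρ Wc hWcG) (CSAux.ρpi ρS n)
      (e.toLinearMap ∘ₗ Wc.subtype) := by
    intro g
    refine LinearMap.ext fun x => funext fun i => ?_
    simp only [LinearMap.comp_apply, Submodule.coe_subtype, CSAux.resRep_coe,
      LinearEquiv.coe_coe, CSAux.ρpi_apply]
    exact he g ↑x i
  have hrankc : Module.finrank ℝ Uc = Module.finrank ℝ Wc := by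
    have h1 := Submodule.finrank_add_eq_of_isCompl hUcC
    have h2 := Submodule.finrank_add_eq_of_isCompl hWcC
    omega
  obtain ⟨β, hβ⟩ := CSAux.iso_of_finrank_eq hsimple hUcιinj hUcιeqv hWcιinj hWcιeqv hrankc
  obtain ⟨φ, hφeqv, hφU⟩ :=
    CSAux.glue_autom U W Uc Wc hUG hWG' hUcG hWcG hUcC hWcC ψ hψ β hβ
  have hφsymm : CSAux.Eqv ρ ρ φ.symm.toLinearMap := CSAux.Eqv.symm hφeqv
  have hφg : ∀ g x, φ (ρ g x) = ρ g (φ x) := by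
    intro g x
    have := hφeqv.apply g x
    simpa using this
  have hφsg : ∀ g x, φ.symm (ρ g x) = ρ g (φ.symm x) := by
    intro g x
    have := hφsymm.apply g x
    simpa using this
  have hJg : ∀ g x, J (ρ g x) = ρ g (J x) := by
    intro g x
    have := congrArg (fun F => F x) (hJG g)
    simpa using this
  have hJpt : ∀ x, J (J x) = -x := by
    intro x
    have := congrArg (fun F => F x) hJ
    simpa using this
  -- φ maps U onto W
  have hUWmem : ∀ u ∈ U, φ u ∈ W := by
    intro u hu
    have : φ u = ((ψ ⟨u, hu⟩ : W) : V) := hφU ⟨u, hu⟩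
    rw [this]
    exact (ψ ⟨u, hu⟩).2
  have hWUmem : ∀ w ∈ W, φ.symm w ∈ U := by
    intro w hw
    have h1 : φ ((ψ.symm ⟨w, hw⟩ : U) : V) = w := by
      rw [hφU (ψ.symm ⟨w, hw⟩), LinearEquiv.apply_symm_apply]
    have h2 : φ.symm w = ((ψ.symm ⟨w, hw⟩ : U) : V) := φ.symm_apply_eq.mpr h1.symm
    rw [h2]
    exact (ψ.symm ⟨w, hw⟩).2
  set J' : V →ₗ[ℝ] V := φ.toLinearMap ∘ₗ J ∘ₗ φ.symm.toLinearMap with hJ'def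
  have hJ'pt : ∀ x, J' x = φ (J (φ.symm x)) := fun x => rfl
  refine ⟨J', ?_, ?_, ?_, ?_⟩
  · intro g; ext x
    simp only [LinearMap.comp_apply, hJ'pt]
    rw [hφsg, hJg, hφg]
  · ext x
    simp only [LinearMap.comp_apply, hJ'pt, LinearMap.neg_apply, LinearMap.id_apply]
    rw [LinearEquiv.symm_apply_apply, hJpt, map_neg, LinearEquiv.apply_symm_apply]
  · apply le_antisymm
    · intro x hx
      obtain ⟨w, hw, rfl⟩ := Submodule.mem_map.mp hx
      rw [hJ'pt]
      exact hUWmem _ (hUJ _ (hWUmem w hw))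
    · intro w hw
      refine Submodule.mem_map.mpr ⟨φ (-(J (φ.symm w))), ?_, ?_⟩
      · exact hUWmem _ (Submodule.neg_mem U (hUJ _ (hWUmem w hw)))
      · rw [hJ'pt, LinearEquiv.symm_apply_apply, map_neg, hJpt, neg_neg,
          LinearEquiv.apply_symm_apply]
  · -- the eigenspace isomorphism, given by base change of φ
    set Lφ : (ℂ ⊗[ℝ] V) →ₗ[ℂ] (ℂ ⊗[ℝ] V) := φ.toLinearMap.baseChange ℂ with hLφdef
    set Lφi : (ℂ ⊗[ℝ] V) →ₗ[ℂ] (ℂ ⊗[ℝ] V) := φ.symm.toLinearMap.baseChange ℂ with hLφidef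
    have hφφs : φ.toLinearMap ∘ₗ φ.symm.toLinearMap = LinearMap.id := by
      ext z; simp
    have hφsφ : φ.symm.toLinearMap ∘ₗ φ.toLinearMap = LinearMap.id := by
      ext z; simp
    have hb1 : Lφ ∘ₗ Lφi = LinearMap.id := by
      rw [hLφdef, hLφidef, ← LinearMap.baseChange_comp, hφφs, LinearMap.baseChange_id]
    have hb2 : Lφi ∘ₗ Lφ = LinearMap.id := by
      rw [hLφdef, hLφidef, ← LinearMap.baseChange_comp, hφsφ, LinearMap.baseChange_id]
    have hb1' : ∀ y, Lφ (Lφi y) = y := by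
      intro y
      have := congrArg (fun F => F y) hb1
      simpa using this
    have hb2' : ∀ y, Lφi (Lφ y) = y := by
      intro y
      have := congrArg (fun F => F y) hb2
      simpa using this
    set φc : (ℂ ⊗[ℝ] V) ≃ₗ[ℂ] (ℂ ⊗[ℝ] V) := LinearEquiv.ofLinear Lφ Lφi hb1 hb2
      with hφcdef
    have hφc_apply : ∀ y, φc y = Lφ y := fun y => rfl
    have hJ'b : J'.baseChange ℂ = Lφ ∘ₗ (J.baseChange ℂ) ∘ₗ Lφi := by
      rw [hJ'def, LinearMap.baseChange_comp, LinearMap.baseChange_comp]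
    have hmap : (Module.End.eigenspace (J.baseChange ℂ) Complex.I).map
        (φc : (ℂ ⊗[ℝ] V) →ₗ[ℂ] (ℂ ⊗[ℝ] V)) =
        Module.End.eigenspace (J'.baseChange ℂ) Complex.I := by
      apply le_antisymm
      · intro x hx
        obtain ⟨y, hy, rfl⟩ := Submodule.mem_map.mp hx
        rw [Module.End.mem_eigenspace_iff] at hy ⊢
        show J'.baseChange ℂ (Lφ y) = Complex.I • (Lφ y)
        rw [hJ'b]
        simp only [LinearMap.comp_apply]
        rw [hb2', hy, map_smul]
      · intro x hx
        rw [Module.End.mem_eigenspace_iff] at hx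
        refine Submodule.mem_map.mpr ⟨Lφi x, ?_, ?_⟩
        · rw [Module.End.mem_eigenspace_iff]
          have h1 : Lφi (J'.baseChange ℂ x) = J.baseChange ℂ (Lφi x) := by
            rw [hJ'b]
            simp only [LinearMap.comp_apply]
            rw [hb2']
          rw [← h1, hx, map_smul]
        · show Lφ (Lφi x) = x
          exact hb1' x
    refine ⟨(φc.submoduleMap (Module.End.eigenspace (J.baseChange ℂ) Complex.I)).trans
      (LinearEquiv.ofEq _ _ hmap), ?_⟩
    intro g x hg
    have hcoe : ∀ z : Module.End.eigenspace (J.baseChange ℂ) Complex.I,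
        ((((φc.submoduleMap (Module.End.eigenspace (J.baseChange ℂ) Complex.I)).trans
          (LinearEquiv.ofEq _ _ hmap)) z : Module.End.eigenspace (J'.baseChange ℂ)
            Complex.I) : ℂ ⊗[ℝ] V) = Lφ (z : ℂ ⊗[ℝ] V) := by
      intro z
      rw [LinearEquiv.trans_apply, LinearEquiv.coe_ofEq_apply,
        LinearEquiv.submoduleMap_apply]
      rfl
    rw [hcoe, hcoe]
    have h := congrArg (LinearMap.baseChange ℂ) (hφeqv g)
    rw [LinearMap.baseChange_comp, LinearMap.baseChange_comp] at h
    have := congrArg (fun F => F (x : ℂ ⊗[ℝ] V)) h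
    simpa using this
end
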